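/- arXiv:1504.01538 — 4 statements merged into one kernel-verified Lean document; each statement's English description precedes it below -/
import Mathlib

section
/- In the quantum semigroup 𝒜_{r,s}(n), the quantum row-determinant equals the quantum column-determinant: rdet_r(A) = cdet_{s⁻¹}(A). -/
open scoped TensorProduct Classical

noncomputable section Prelude

variable {F : Type*} [Field F] {R : Type*} [Ring R] [Algebra F R]

/-- The number of inversions `l(σ)` of a permutation `σ ∈ S_n`. -/
def inversions {n : ℕ} (σ : Equiv.Perm (Fin n)) : ℕ :=
  (Finset.univ.filter fun p : Fin n × Fin n => p.1 < p.2 ∧ σ p.2 < σ p.1).card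

/-- The quantum row determinant `rdet_r(A) = Σ_σ (-r)^{l(σ)} a_{1σ(1)} ⋯ a_{nσ(n)}`. -/
def rdet (r : F) {n : ℕ} (a : Fin n → Fin n → R) : R :=
  ∑ σ : Equiv.Perm (Fin n), (-r) ^ inversions σ • (List.ofFn fun i => a i (σ i)).prod

/-- The quantum column determinant `cdet_{s⁻¹}(A) = Σ_σ (-s)^{-l(σ)} a_{σ(1)1} ⋯ a_{σ(n)n}`. -/
def cdet (s : F) {n : ℕ} (a : Fin n → Fin n → R) : R :=
  ∑ σ : Equiv.Perm (Fin n),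
    ((-s) ^ (-(inversions σ : ℤ))) • (List.ofFn fun i => a (σ i) i).prod

/-- The quantum (column) permanent `per_q(A) = Σ_σ q^{l(σ)} a_{σ(1)1} ⋯ a_{σ(n)n}`. -/
def qper (q : F) {n : ℕ} (a : Fin n → Fin n → R) : R :=
  ∑ σ : Equiv.Perm (Fin n), q ^ inversions σ • (List.ofFn fun i => a (σ i) i).prod

/-- The defining relations of the two-parameter quantum semigroup `𝒜_{r,s}(n)`:
`a` plays the role of the matrix of generators `(a_{ij})`. -/
def IsQSemigroup (r s : F) {n : ℕ} (a : Fin n → Fin n → R) : Prop :=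
  (∀ i k l : Fin n, k < l → a i k * a i l = r • (a i l * a i k)) ∧
  (∀ i j k : Fin n, i < j → a i k * a j k = s⁻¹ • (a j k * a i k)) ∧
  (∀ i j k l : Fin n, i < j → k < l → r • (a i l * a j k) = s⁻¹ • (a j k * a i l)) ∧
  (∀ i j k l : Fin n, i < j → k < l →
    a i k * a j l - a j l * a i k = (r - s) • (a i l * a j k))

/-- The quantum integer `[m]_v = 1 + v + ⋯ + v^{m-1}`. -/
def qint (v : F) (m : ℕ) : F := ∑ k ∈ Finset.range m, v ^ k

/-- The quantum factorial `[n]_v! = [n]_v [n-1]_v ⋯ [1]_v`. -/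
def qfac (v : F) (n : ℕ) : F := ∏ m ∈ Finset.range n, qint v (m + 1)

/-- The position `2i-1` (1-based), i.e. `2i` (0-based), in `Fin (2n)`. -/
def pL {n : ℕ} (i : Fin n) : Fin (2 * n) := ⟨2 * i.1, by have := i.2; omega⟩

/-- The position `2i` (1-based), i.e. `2i+1` (0-based), in `Fin (2n)`. -/
def pR {n : ℕ} (i : Fin n) : Fin (2 * n) := ⟨2 * i.1 + 1, by have := i.2; omega⟩

/-- The product `b_{σ(1)σ(2)} b_{σ(3)σ(4)} ⋯ b_{σ(2n-1)σ(2n)}`. -/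
def pairProd {n : ℕ} (b : Fin (2 * n) → Fin (2 * n) → R) (σ : Equiv.Perm (Fin (2 * n))) : R :=
  (List.ofFn fun i : Fin n => b (σ (pL i)) (σ (pR i))).prod

/-- Membership in `Π′`: `σ(2i-1) < σ(2i)` for all `i = 1, …, n`. -/
def inPi' {n : ℕ} (σ : Equiv.Perm (Fin (2 * n))) : Prop := ∀ i : Fin n, σ (pL i) < σ (pR i)

/-- Membership in `Π`: additionally `σ(1) < σ(3) < ⋯ < σ(2n-1)`. -/
def inPi {n : ℕ} (σ : Equiv.Perm (Fin (2 * n))) : Prop :=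
  inPi' σ ∧ ∀ i j : Fin n, i < j → σ (pL i) < σ (pL j)

/-- `Σ_{σ∈Π′} (-r)^{l(σ)} b_{σ(1)σ(2)} ⋯ b_{σ(2n-1)σ(2n)}`. -/
def pfSum (r : F) {n : ℕ} (b : Fin (2 * n) → Fin (2 * n) → R) : R :=
  ∑ σ : Equiv.Perm (Fin (2 * n)), if inPi' σ then (-r) ^ inversions σ • pairProd b σ else 0

/-- The quantum Pfaffian `Pf_r(B)`. -/
def Pf (r : F) {n : ℕ} (b : Fin (2 * n) → Fin (2 * n) → R) : R :=
  (qfac (r ^ 4) n)⁻¹ • pfSum r b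

/-- `Σ_{σ∈Π′} (-s)^{-l(σ)} b_{σ(1)σ(2)} ⋯ b_{σ(2n-1)σ(2n)}`. -/
def pfSumInv (s : F) {n : ℕ} (b : Fin (2 * n) → Fin (2 * n) → R) : R :=
  ∑ σ : Equiv.Perm (Fin (2 * n)),
    if inPi' σ then ((-s) ^ (-(inversions σ : ℤ))) • pairProd b σ else 0

/-- The quantum Pfaffian with parameter `s⁻¹`, `Pf_{s⁻¹}(B)`. -/
def PfInv (s : F) {n : ℕ} (b : Fin (2 * n) → Fin (2 * n) → R) : R :=
  (qfac (s⁻¹ ^ 4) n)⁻¹ • pfSumInv s b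

/-- `Σ_{σ∈Π′} q^{l(σ)} b_{σ(1)σ(2)} ⋯ b_{σ(2n-1)σ(2n)}`. -/
def hfSum (q : F) {n : ℕ} (b : Fin (2 * n) → Fin (2 * n) → R) : R :=
  ∑ σ : Equiv.Perm (Fin (2 * n)), if inPi' σ then q ^ inversions σ • pairProd b σ else 0

/-- The quantum Hafnian `Hf_q(B)`. -/
def Hf (q : F) {n : ℕ} (b : Fin (2 * n) → Fin (2 * n) → R) : R :=
  (qfac (q ^ 4) n)⁻¹ • hfSum q b

/-- The `q`-Maya (`q`-Plücker) relations. -/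
def MayaRels (q : F) {n : ℕ} (b : Fin (2 * n) → Fin (2 * n) → R) : Prop :=
  ∀ i j k l : Fin (2 * n), i < j → j < k → k < l →
    b i j * b k l - q • (b i k * b j l) + q ^ 2 • (b i l * b j k) =
      b k l * b i j - q⁻¹ • (b j l * b i k) + q⁻¹ ^ 2 • (b j k * b i l)

/-- The `(−q)`-Maya relations. -/
def NegMayaRels (q : F) {n : ℕ} (b : Fin (2 * n) → Fin (2 * n) → R) : Prop :=
  ∀ i j k l : Fin (2 * n), i < j → j < k → k < l →
    b i j * b k l + q • (b i k * b j l) + q ^ 2 • (b i l * b j k) =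
      b k l * b i j + q⁻¹ • (b j l * b i k) + q⁻¹ ^ 2 • (b j k * b i l)

end Prelude

section AuxProof

variable {F : Type*} [Field F] {R : Type*} [Ring R] [Algebra F R]
variable {F : Type*} [Field F] {R : Type*} [Ring R] [Algebra F R]

private lemma ofFn_swap_prod : ∀ (n : ℕ) (f g : Fin n → R) (c : F) (p : ℕ)
    (hp : p + 1 < n),
    (∀ i : Fin n, (i : ℕ) ≠ p → (i : ℕ) ≠ p + 1 → f i = g i) →
    g ⟨p, by omega⟩ = f ⟨p+1, hp⟩ →
    g ⟨p+1, hp⟩ = f ⟨p, by omega⟩ →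
    f ⟨p, by omega⟩ * f ⟨p+1, hp⟩ = c • (g ⟨p, by omega⟩ * g ⟨p+1, hp⟩) →
    (List.ofFn f).prod = c • (List.ofFn g).prod := by
  intro n f g c p
  induction p generalizing n f g with
  | zero =>
    intro hp h hg1 hg2 hrel
    obtain ⟨m, rfl⟩ : ∃ m, n = m + 2 := ⟨n - 2, by omega⟩
    rw [List.ofFn_succ, List.ofFn_succ, List.ofFn_succ (f := g), List.ofFn_succ]
    have htail : (fun i : Fin m => f i.succ.succ) = fun i : Fin m => g i.succ.succ := by
      funext i
      exact h _ (by simp [Fin.val_succ]) (by simp [Fin.val_succ])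
    have h0 : f 0 = f ⟨0, by omega⟩ := rfl
    have h1 : (fun i : Fin (m+1) => f i.succ) 0 = f ⟨1, hp⟩ := rfl
    rw [List.prod_cons, List.prod_cons, List.prod_cons, List.prod_cons, htail,
      ← mul_assoc, ← mul_assoc]
    have : f 0 * (fun i : Fin (m+1) => f i.succ) 0
        = c • (g 0 * (fun i : Fin (m+1) => g i.succ) 0) := by
      convert hrel using 3 <;> rfl
    rw [this, smul_mul_assoc]
  | succ p ih =>
    intro hp h hg1 hg2 hrel
    obtain ⟨m, rfl⟩ : ∃ m, n = m + 1 := ⟨n - 1, by omega⟩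
    rw [List.ofFn_succ, List.ofFn_succ (f := g), List.prod_cons, List.prod_cons]
    have h0 : f 0 = g 0 := h 0 (by simp) (by simp)
    have hp' : p + 1 < m := by omega
    have hrec : (List.ofFn fun i : Fin m => f i.succ).prod
        = c • (List.ofFn fun i : Fin m => g i.succ).prod := by
      apply ih m _ _ hp'
      · intro i hi1 hi2
        exact h i.succ (by simpa [Fin.val_succ] using by omega)
          (by simp [Fin.val_succ]; omega)
      · rw [Fin.succ_mk, Fin.succ_mk]; exact hg1
      · rw [Fin.succ_mk, Fin.succ_mk]; exact hg2
      · rw [Fin.succ_mk, Fin.succ_mk]; exact hrel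
    rw [hrec, h0, mul_smul_comm]

variable {n : ℕ}

private lemma perm_eq_one_of_mono {v : Equiv.Perm (Fin n)}
    (h : ∀ x y : Fin n, x < y → v x < v y) : v = 1 := by
  have hm : StrictMono (v : Fin n → Fin n) := fun x y hxy => h x y hxy
  ext x
  have h2 := Fin.coe_orderIso_apply (StrictMono.orderIsoOfSurjective _ hm v.surjective) x
  rw [show ((StrictMono.orderIsoOfSurjective _ hm v.surjective) x) = v x from
    congrFun (StrictMono.coe_orderIsoOfSurjective _ hm v.surjective) x] at h2
  simpa using h2

private lemma inversions_zero {v : Equiv.Perm (Fin n)} (h : inversions v = 0) : v = 1 := by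
  unfold inversions at h
  rw [Finset.card_eq_zero] at h
  apply perm_eq_one_of_mono
  intro x y hxy
  rcases lt_trichotomy (v x) (v y) with h' | h' | h'
  · exact h'
  · exact absurd (v.injective h') (ne_of_lt hxy)
  · exfalso
    have hmem : (x, y) ∈ (Finset.univ.filter
        fun p : Fin n × Fin n => p.1 < p.2 ∧ v p.2 < v p.1) := by simp [hxy, h']
    rw [h] at hmem
    exact absurd hmem (Finset.notMem_empty _)

private def adjSwap (p : ℕ) (hp : p + 1 < n) : Equiv.Perm (Fin n) :=
  Equiv.swap ⟨p, by omega⟩ ⟨p+1, hp⟩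

private lemma adjSwap_lt {p : ℕ} (hp : p + 1 < n) {x y : Fin n} (hxy : x < y)
    (hne : ¬((x : ℕ) = p ∧ (y : ℕ) = p + 1)) : adjSwap p hp x < adjSwap p hp y := by
  have hv : ∀ z : Fin n, ((Equiv.swap (⟨p, by omega⟩ : Fin n) ⟨p+1, hp⟩) z : ℕ)
      = if (z : ℕ) = p then p+1 else if (z : ℕ) = p+1 then p else (z : ℕ) := by
    intro z
    rw [Equiv.swap_apply_def]
    split_ifs <;> simp_all [Fin.ext_iff]
  unfold adjSwap
  rw [Fin.lt_def, hv, hv]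
  rw [Fin.lt_def] at hxy
  split_ifs <;> omega

private lemma adjSwap_invol {p : ℕ} (hp : p + 1 < n) (z : Fin n) :
    adjSwap p hp (adjSwap p hp z) = z := Equiv.swap_apply_self _ _ z

private lemma inversions_adjSwap {v : Equiv.Perm (Fin n)} {p : ℕ} (hp : p + 1 < n)
    (hd : v ⟨p+1, hp⟩ < v ⟨p, by omega⟩) :
    inversions v = inversions (v * adjSwap p hp) + 1 := by
  set τ := adjSwap p hp with hτ
  set P : Fin n := ⟨p, by omega⟩ with hP
  set Q : Fin n := ⟨p+1, hp⟩ with hQ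
  have hτP : τ P = Q := Equiv.swap_apply_left _ _
  have hτQ : τ Q = P := Equiv.swap_apply_right _ _
  have hPQ : P < Q := by rw [Fin.lt_def]; simp [hP, hQ]
  set Sv := Finset.univ.filter fun q : Fin n × Fin n => q.1 < q.2 ∧ v q.2 < v q.1 with hSv
  set Sw := Finset.univ.filter
    (fun q : Fin n × Fin n => q.1 < q.2 ∧ (v * τ) q.2 < (v * τ) q.1) with hSw
  have hmem : (P, Q) ∈ Sv := by
    rw [hSv, Finset.mem_filter]
    exact ⟨Finset.mem_univ _, hPQ, hd⟩
  have hcard : Sw.card = (Sv.erase (P, Q)).card := by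
    apply Finset.card_nbij' (i := fun q => (τ q.1, τ q.2)) (j := fun q => (τ q.1, τ q.2))
    · intro q hq
      rw [Finset.mem_coe, hSw, Finset.mem_filter] at hq
      obtain ⟨-, h1, h2⟩ := hq
      simp only [Equiv.Perm.mul_apply] at h2
      have hne : ¬((q.1 : ℕ) = p ∧ (q.2 : ℕ) = p + 1) := by
        rintro ⟨e1, e2⟩
        have e1' : q.1 = P := Fin.ext e1
        have e2' : q.2 = Q := Fin.ext e2
        rw [e1', e2', hτP, hτQ] at h2
        exact absurd hd (not_lt.2 h2.le)
      have hlt := adjSwap_lt hp h1 hne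
      rw [Finset.mem_coe, Finset.mem_erase]
      refine ⟨?_, ?_⟩
      · rintro e
        have e1 : τ q.1 = P := congrArg Prod.fst e
        have e2 : τ q.2 = Q := congrArg Prod.snd e
        have h1' : q.1 = Q := by rw [← adjSwap_invol hp q.1, ← hτ, e1, hτP]
        have h2' : q.2 = P := by rw [← adjSwap_invol hp q.2, ← hτ, e2, hτQ]
        rw [h1', h2'] at h1
        exact absurd h1 (not_lt.2 hPQ.le)
      · rw [hSv, Finset.mem_filter]
        exact ⟨Finset.mem_univ _, hlt, h2⟩
    · intro q hq
      rw [Finset.mem_coe, Finset.mem_erase, hSv, Finset.mem_filter] at hq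
      obtain ⟨hne, -, h1, h2⟩ := hq
      have hne' : ¬((q.1 : ℕ) = p ∧ (q.2 : ℕ) = p + 1) := by
        rintro ⟨e1, e2⟩
        exact hne (Prod.ext (Fin.ext e1) (Fin.ext e2))
      have hlt := adjSwap_lt hp h1 hne'
      rw [Finset.mem_coe, hSw, Finset.mem_filter]
      refine ⟨Finset.mem_univ _, hlt, ?_⟩
      simp only [Equiv.Perm.mul_apply, ← hτ]
      rw [adjSwap_invol, adjSwap_invol]
      exact h2
    · intro q _
      simp only [← hτ]
      rw [adjSwap_invol, adjSwap_invol]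
    · intro q _
      simp only [← hτ]
      rw [adjSwap_invol, adjSwap_invol]
  have hfin := Finset.card_erase_add_one hmem
  show Sv.card = Sw.card + 1
  omega

private lemma inversions_inv (v : Equiv.Perm (Fin n)) : inversions v⁻¹ = inversions v := by
  unfold inversions
  apply Finset.card_nbij' (i := fun q => (v⁻¹ q.2, v⁻¹ q.1)) (j := fun q => (v q.2, v q.1))
  · intro q hq
    simp only [Finset.mem_coe, Finset.mem_filter, Finset.mem_univ, true_and] at hq ⊢
    simpa using ⟨hq.2, hq.1⟩
  · intro q hq
    simp only [Finset.mem_coe, Finset.mem_filter, Finset.mem_univ, true_and] at hq ⊢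
    simpa using ⟨hq.2, hq.1⟩
  · intro q _ ; simp
  · intro q _ ; simp

private lemma inversions_one : inversions (1 : Equiv.Perm (Fin n)) = 0 := by
  unfold inversions
  rw [Finset.card_eq_zero, Finset.filter_eq_empty_iff]
  rintro q -
  rintro ⟨h1, h2⟩
  simp only [Equiv.Perm.one_apply] at h2
  exact absurd (h1.trans h2) (lt_irrefl _)

private lemma exists_adj_descent {v : Equiv.Perm (Fin n)} (hv : v ≠ 1) :
    ∃ p : ℕ, ∃ hp : p + 1 < n, v ⟨p+1, hp⟩ < v ⟨p, by omega⟩ := by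
  by_contra hcon
  push_neg at hcon
  apply hv
  apply perm_eq_one_of_mono
  have mono_adj : ∀ (p : ℕ) (hp : p + 1 < n), v ⟨p, by omega⟩ < v ⟨p+1, hp⟩ := by
    intro p hp
    refine lt_of_le_of_ne (hcon p hp) fun e => ?_
    have := v.injective e
    simp [Fin.ext_iff] at this
  have key : ∀ (k : ℕ) (x y : Fin n), (y : ℕ) = (x : ℕ) + k + 1 → v x < v y := by
    intro k
    induction k with
    | zero =>
      intro x y hxy
      have hp : (x : ℕ) + 1 < n := by have := y.2; omega
      have hy : y = ⟨(x : ℕ) + 1, hp⟩ := Fin.ext (by simp; omega)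
      have hm := mono_adj (x : ℕ) hp
      rw [Fin.eta, ← hy] at hm
      exact hm
    | succ k ihk =>
      intro x y hxy
      have hp : (x : ℕ) + 1 < n := by have := y.2; omega
      have h1 : v x < v ⟨(x : ℕ) + 1, hp⟩ := by
        have hm := mono_adj (x : ℕ) hp
        rwa [Fin.eta] at hm
      exact h1.trans (ihk ⟨(x : ℕ) + 1, hp⟩ y (by simp; omega))
  intro x y hxy
  rw [Fin.lt_def] at hxy
  exact key ((y : ℕ) - (x : ℕ) - 1) x y (by omega)

private lemma key_reorder (r s : F) (hr : r ≠ 0) {n : ℕ} (a : Fin n → Fin n → R)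
    (h3 : ∀ i j k l : Fin n, i < j → k < l →
      r • (a i l * a j k) = s⁻¹ • (a j k * a i l)) :
    ∀ (m : ℕ) (u v : Equiv.Perm (Fin n)), inversions v = m →
    (∀ p q : Fin n, p < q → v q < v p → u p < u q) →
    (List.ofFn fun i => a (u i) (v i)).prod
      = ((r * s) ^ m)⁻¹ • (List.ofFn fun i => a (u (v⁻¹ i)) i).prod := by
  intro m
  induction m with
  | zero =>
    intro u v hv _
    have hone : v = 1 := inversions_zero hv
    subst hone
    simp
  | succ m ih =>
    intro u v hv hcond
    have hv1 : v ≠ 1 := by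
      rintro rfl
      rw [inversions_one] at hv
      omega
    obtain ⟨p, hp, hd⟩ := exists_adj_descent hv1
    set τ := adjSwap p hp with hτ
    set P : Fin n := ⟨p, by omega⟩ with hPdef
    set Q : Fin n := ⟨p+1, hp⟩ with hQdef
    have hτP : τ P = Q := Equiv.swap_apply_left _ _
    have hτQ : τ Q = P := Equiv.swap_apply_right _ _
    have hPQ : P < Q := by rw [Fin.lt_def]; simp [hPdef, hQdef]
    have hrow : u P < u Q := hcond P Q hPQ hd
    have hrel : a (u P) (v P) * a (u Q) (v Q)
        = ((r * s)⁻¹ : F) • (a (u Q) (v Q) * a (u P) (v P)) := by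
      have hh := h3 (u P) (u Q) (v Q) (v P) hrow hd
      have hthis := congrArg (fun z => (r⁻¹ : F) • z) hh
      simp only [smul_smul] at hthis
      rw [inv_mul_cancel₀ hr, one_smul] at hthis
      rw [hthis, mul_inv_rev, mul_comm]
    have hswap : (List.ofFn fun i => a (u i) (v i)).prod
        = ((r * s)⁻¹ : F) • (List.ofFn fun i => a (u (τ i)) (v (τ i))).prod := by
      apply ofFn_swap_prod n _ _ _ p hp
      · intro i hi1 hi2
        have hne1 : i ≠ P := fun e => hi1 (by rw [e])
        have hne2 : i ≠ Q := fun e => hi2 (by rw [e])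
        rw [show τ i = i from Equiv.swap_apply_of_ne_of_ne hne1 hne2]
      · show a (u (τ P)) (v (τ P)) = a (u Q) (v Q)
        rw [hτP]
      · show a (u (τ Q)) (v (τ Q)) = a (u P) (v P)
        rw [hτQ]
      · show a (u P) (v P) * a (u Q) (v Q)
          = ((r * s)⁻¹ : F) • (a (u (τ P)) (v (τ P)) * a (u (τ Q)) (v (τ Q)))
        rw [hτP, hτQ]
        exact hrel
    have hv' : inversions (v * τ) = m := by
      have := inversions_adjSwap hp hd
      rw [← hτ] at this
      omega
    have hcond' : ∀ x y : Fin n, x < y → (v * τ) y < (v * τ) x → (u * τ) x < (u * τ) y := by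
      intro x y hxy hvy
      simp only [Equiv.Perm.mul_apply] at hvy ⊢
      have hne : ¬((x : ℕ) = p ∧ (y : ℕ) = p + 1) := by
        rintro ⟨e1, e2⟩
        have ex : x = P := Fin.ext e1
        have ey : y = Q := Fin.ext e2
        rw [ex, ey, hτP, hτQ] at hvy
        exact absurd hd (not_lt.2 hvy.le)
      exact hcond _ _ (adjSwap_lt hp hxy hne) hvy
    have hih := ih (u * τ) (v * τ) hv' hcond'
    simp only [Equiv.Perm.mul_apply] at hih
    have hτinv : (v * τ)⁻¹ = τ⁻¹ * v⁻¹ := mul_inv_rev v τ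
    have hfix : ∀ i : Fin n, τ ((v * τ)⁻¹ i) = v⁻¹ i := by
      intro i
      rw [hτinv]
      simp only [Equiv.Perm.mul_apply]
      have : τ⁻¹ = τ := Equiv.swap_inv _ _
      rw [this]
      exact adjSwap_invol hp _
    have hrw : (List.ofFn fun i => a (u (τ ((v * τ)⁻¹ i))) i)
        = (List.ofFn fun i => a (u (v⁻¹ i)) i) := by
      congr 1
      funext i
      rw [hfix i]
    rw [hrw] at hih
    rw [hswap, hih, smul_smul]
    congr 1
    rw [← mul_inv, pow_succ, mul_comm ((r*s)^m)]

end AuxProof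

/-- In the quantum semigroup `𝒜_{r,s}(n)` (equivalently, for any `F`-algebra
`R` with elements `a_{ij}` satisfying its defining relations), the quantum row-determinant
equals the quantum column-determinant: `rdet_r(A) = cdet_{s⁻¹}(A)`. -/
theorem rdet_eq_cdet {F : Type*} [Field F] (r s : F) (hr : r ≠ 0) (hs : s ≠ 0)
    {R : Type*} [Ring R] [Algebra F R] {n : ℕ} (a : Fin n → Fin n → R)
    (ha : IsQSemigroup r s a) :
    rdet r a = cdet s a := by
  obtain ⟨h1, h2, h3, h4⟩ := ha
  have hkey := key_reorder r s hr a h3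
  have hscal : ∀ l : ℕ, ((-r) ^ l * ((r * s) ^ l)⁻¹ : F) = (-s) ^ (-(l : ℤ)) := by
    intro l
    rw [zpow_neg, zpow_natCast]
    have hne : ((-s) ^ l : F) ≠ 0 := pow_ne_zero _ (neg_ne_zero.2 hs)
    have hprod : ((-r) ^ l : F) * (-s) ^ l = (r * s) ^ l := by
      rw [← mul_pow, neg_mul_neg]
    have h0 : ((r * s) ^ l : F) ≠ 0 := by
      rw [← hprod]
      exact mul_ne_zero (pow_ne_zero _ (neg_ne_zero.2 hr)) hne
    field_simp
    linear_combination hprod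
  have hterm : ∀ v : Equiv.Perm (Fin n),
      (-r) ^ inversions v • (List.ofFn fun i => a i (v i)).prod
        = ((-s) ^ (-(inversions v⁻¹ : ℤ))) • (List.ofFn fun i => a (v⁻¹ i) i).prod := by
    intro v
    have hcond : ∀ p q : Fin n, p < q → v q < v p → (1 : Equiv.Perm (Fin n)) p < (1 : Equiv.Perm (Fin n)) q := by
      intro p q hpq _
      simpa using hpq
    have hk := hkey (inversions v) 1 v rfl hcond
    simp only [Equiv.Perm.one_apply] at hk
    rw [hk, smul_smul, hscal, inversions_inv]
  rw [rdet, cdet]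
  calc ∑ σ : Equiv.Perm (Fin n), (-r) ^ inversions σ • (List.ofFn fun i => a i (σ i)).prod
      = ∑ σ : Equiv.Perm (Fin n),
          ((-s) ^ (-(inversions σ⁻¹ : ℤ))) • (List.ofFn fun i => a (σ⁻¹ i) i).prod :=
        Finset.sum_congr rfl fun σ _ => hterm σ
    _ = ∑ σ : Equiv.Perm (Fin n),
          ((-s) ^ (-(inversions σ : ℤ))) • (List.ofFn fun i => a (σ i) i).prod := by
        apply Fintype.sum_equiv (Equiv.inv (Equiv.Perm (Fin n)))
        intro σ
        rfl
end

section
/- In the bialgebra 𝒜_{r,s}(n), the quantum row-determinant is a group-like element: Δ(rdet_r(A)) = rdet_r(A) ⊗ rdet_r(A) and ε(rdet_r(A)) = 1. -/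
open scoped TensorProduct Classical

noncomputable section QAux
namespace QAux

lemma swap_sorted {n : ℕ} (i j p q : Fin n) (hj : j.1 = i.1 + 1) (hpq : p < q)
    (hne : ¬(p = i ∧ q = j)) : Equiv.swap i j p < Equiv.swap i j q := by
  have hne' : ¬(p.1 = i.1 ∧ q.1 = j.1) := fun h => hne ⟨Fin.ext h.1, Fin.ext h.2⟩
  have hpq' := Fin.lt_def.mp hpq
  simp only [Equiv.swap_apply_def]
  split_ifs <;> simp only [Fin.lt_def, Fin.ext_iff] at * <;> omega

lemma inversions_mul_swap {n : ℕ} (σ : Equiv.Perm (Fin n)) (i j : Fin n)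
    (hj : j.1 = i.1 + 1) (h : σ i < σ j) :
    inversions (σ * Equiv.swap i j) = inversions σ + 1 := by
  classical
  set t := Equiv.swap i j with ht
  have hij : i < j := by simp [Fin.lt_def, hj]
  have hti : t i = j := Equiv.swap_apply_left i j
  have htj : t j = i := Equiv.swap_apply_right i j
  have htt : ∀ x, t (t x) = x := fun x => Equiv.swap_apply_self i j x
  have hmul : ∀ x, (σ * t) x = σ (t x) := fun x => rfl
  have hpair : ∀ p : Fin n × Fin n, p.1 < p.2 → (t p.1, t p.2) = (i, j) → False := by
    intro p hp hcon
    have h1 : p.1 = j := by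
      have := congrArg t (congrArg Prod.fst hcon)
      rwa [htt, hti] at this
    have h2 : p.2 = i := by
      have := congrArg t (congrArg Prod.snd hcon)
      rwa [htt, htj] at this
    rw [h1, h2] at hp
    exact absurd hp (not_lt.mpr hij.le)
  have key : (Finset.univ.filter fun p : Fin n × Fin n =>
      p.1 < p.2 ∧ (σ * t) p.2 < (σ * t) p.1).card =
      (insert (i, j) (Finset.univ.filter fun p : Fin n × Fin n =>
        p.1 < p.2 ∧ σ p.2 < σ p.1)).card := by
    apply Finset.card_bij' (i := fun p _ => if p = (i, j) then (i, j) else (t p.1, t p.2))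
      (j := fun p _ => if p = (i, j) then (i, j) else (t p.1, t p.2))
    · intro p hp
      by_cases hpij : p = (i, j)
      · simp [hpij]
      · rw [if_neg hpij]
        simp only [Finset.mem_filter, Finset.mem_univ, true_and] at hp
        apply Finset.mem_insert_of_mem
        simp only [Finset.mem_filter, Finset.mem_univ, true_and]
        refine ⟨swap_sorted i j p.1 p.2 hj hp.1 ?_, ?_⟩
        · intro ⟨h1, h2⟩; exact hpij (Prod.ext h1 h2)
        · have := hp.2
          rwa [hmul, hmul] at this
    · intro p hp
      rcases Finset.mem_insert.mp hp with hpij | hp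
      · rw [if_pos hpij]
        simp only [Finset.mem_filter, Finset.mem_univ, true_and]
        exact ⟨hij, by rw [hmul, hmul, hti, htj]; exact h⟩
      · have hpij : p ≠ (i, j) := by
          rintro rfl
          simp only [Finset.mem_filter, Finset.mem_univ, true_and] at hp
          exact absurd hp.2 (not_lt.mpr h.le)
        rw [if_neg hpij]
        simp only [Finset.mem_filter, Finset.mem_univ, true_and] at hp ⊢
        refine ⟨swap_sorted i j p.1 p.2 hj hp.1 ?_, ?_⟩
        · intro ⟨h1, h2⟩; exact hpij (Prod.ext h1 h2)
        · rw [hmul, hmul, htt, htt]; exact hp.2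
    · intro p hp
      by_cases hpij : p = (i, j)
      · rw [if_pos hpij, if_pos rfl, hpij]
      · have hp1 : p.1 < p.2 := by
          simp only [Finset.mem_filter, Finset.mem_univ, true_and] at hp
          exact hp.1
        have h2 : (t p.1, t p.2) ≠ (i, j) := fun hc => hpair p hp1 hc
        rw [if_neg hpij, if_neg h2]
        exact Prod.ext (htt p.1) (htt p.2)
    · intro p hp
      by_cases hpij : p = (i, j)
      · rw [if_pos hpij, if_pos rfl, hpij]
      · have hp1 : p.1 < p.2 := by
          rcases Finset.mem_insert.mp hp with h' | hp'
          · exact absurd h' hpij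
          · simp only [Finset.mem_filter, Finset.mem_univ, true_and] at hp'
            exact hp'.1
        have h2 : (t p.1, t p.2) ≠ (i, j) := fun hc => hpair p hp1 hc
        rw [if_neg hpij, if_neg h2]
        exact Prod.ext (htt p.1) (htt p.2)
  have hnotmem : (i, j) ∉ (Finset.univ.filter fun p : Fin n × Fin n =>
      p.1 < p.2 ∧ σ p.2 < σ p.1) := by
    simp only [Finset.mem_filter, Finset.mem_univ, true_and, not_and]
    intro _; exact not_lt.mpr h.le
  unfold inversions
  rw [key, Finset.card_insert_of_notMem hnotmem]

lemma inversions_one {n : ℕ} : inversions (1 : Equiv.Perm (Fin n)) = 0 := by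
  unfold inversions
  rw [Finset.card_eq_zero]
  ext p
  simp only [Finset.mem_filter, Finset.mem_univ, true_and, Finset.notMem_empty, iff_false,
    not_and, Equiv.Perm.coe_one, id_eq]
  exact fun h => by
    have := (Finset.mem_filter.mp h).2
    exact lt_asymm this.1 this.2

lemma exists_descent {n : ℕ} (τ : Equiv.Perm (Fin n)) (hτ : τ ≠ 1) :
    ∃ i j : Fin n, j.1 = i.1 + 1 ∧ τ j < τ i := by
  by_contra hcon
  push_neg at hcon
  apply hτ
  have hmono : StrictMono ⇑τ := by
    cases n with
    | zero => exact fun p => p.elim0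
    | succ m =>
      rw [Fin.strictMono_iff_lt_succ]
      intro i
      have h1 : (i.succ : Fin (m + 1)).1 = (i.castSucc : Fin (m + 1)).1 + 1 := by simp
      have h2 := hcon i.castSucc i.succ h1
      have hne : τ i.castSucc ≠ τ i.succ := by
        intro hc
        have := τ.injective hc
        have := congrArg Fin.val this
        simp at this
      exact lt_of_le_of_ne (not_lt.mp fun hlt => absurd hlt (not_lt.mpr h2)) hne
  have hco : ⇑τ = id := by
    have hinj := @Set.range_injOn_strictMono (Fin n) (Fin n) _ _
      (inferInstance : WellFoundedLT (Fin n))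
    refine hinj.eq_iff hmono strictMono_id |>.mp ?_
    rw [Set.range_id, Set.range_eq_univ.mpr τ.surjective]
  exact Equiv.coe_fn_injective hco

variable {F : Type*} [Field F] {R : Type*} [Ring R] [Algebra F R]

omit [Field F] [Algebra F R] in
lemma listProd_split {n : ℕ} (i j : Fin n) (hj : j.1 = i.1 + 1) (g : Fin n → R) :
    (List.ofFn g).prod =
      ((List.ofFn g).take i.1).prod *
        (g i * (g j * (((List.ofFn g).drop (i.1 + 2)).prod))) := by
  have hlen : (List.ofFn g).length = n := List.length_ofFn (f := g)
  have hi1 : i.1 < (List.ofFn g).length := by rw [hlen]; exact i.2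
  have hi2 : i.1 + 1 < (List.ofFn g).length := by rw [hlen]; omega
  have hsplit : List.ofFn g = (List.ofFn g).take i.1 ++
      g i :: g j :: (List.ofFn g).drop (i.1 + 2) := by
    conv_lhs => rw [← List.take_append_drop i.1 (List.ofFn g)]
    congr 1
    rw [List.drop_eq_getElem_cons hi1, List.drop_eq_getElem_cons hi2]
    congr 1
    · simp
    · congr 1
      simp only [List.getElem_ofFn]
      congr 1
      exact Fin.ext hj.symm
  conv_lhs => rw [hsplit]
  rw [List.prod_append, List.prod_cons, List.prod_cons]

omit [Field F] [Algebra F R] in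
lemma take_congr {n : ℕ} (i : Fin n) (g g' : Fin n → R)
    (h : ∀ m : Fin n, m.1 < i.1 → g m = g' m) :
    (List.ofFn g).take i.1 = (List.ofFn g').take i.1 := by
  apply List.ext_getElem
  · simp
  · intro m h1 h2
    simp only [List.getElem_take, List.getElem_ofFn]
    apply h
    simpa using h1

omit [Field F] [Algebra F R] in
lemma drop_congr {n : ℕ} (k : ℕ) (g g' : Fin n → R)
    (h : ∀ m : Fin n, k ≤ m.1 → g m = g' m) :
    (List.ofFn g).drop k = (List.ofFn g').drop k := by
  apply List.ext_getElem
  · simp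
  · intro m h1 h2
    simp only [List.getElem_drop, List.getElem_ofFn]
    apply h
    simp

lemma tensor_ofFn_prod {n : ℕ} (x y : Fin n → R) :
    (List.ofFn fun i => x i ⊗ₜ[F] y i).prod =
      (List.ofFn x).prod ⊗ₜ[F] (List.ofFn y).prod := by
  induction n with
  | zero => simp [Algebra.TensorProduct.one_def]
  | succ m ih =>
    rw [List.ofFn_succ, List.ofFn_succ (f := x), List.ofFn_succ (f := y),
      List.prod_cons, List.prod_cons, List.prod_cons, ih,
      Algebra.TensorProduct.tmul_mul_tmul]

omit [Field F] [Algebra F R] in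
lemma prod_sum_expand {m n : ℕ} (c : Fin m → Fin n → R) :
    (List.ofFn fun i => ∑ k : Fin n, c i k).prod =
      ∑ f : Fin m → Fin n, (List.ofFn fun i => c i (f i)).prod := by
  induction m with
  | zero =>
    simp only [List.ofFn_zero, List.prod_nil]
    rw [Finset.sum_const]
    simp
  | succ m ih =>
    rw [List.ofFn_succ, List.prod_cons]
    have e := (Fin.consEquiv (fun _ : Fin (m + 1) => Fin n)).sum_comp
      (fun f : Fin (m + 1) → Fin n => (List.ofFn fun i => c i (f i)).prod)
    rw [← e, Fintype.sum_prod_type, ih (fun i k => c i.succ k), Finset.sum_mul_sum]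
    refine Finset.sum_congr rfl fun x _ => Finset.sum_congr rfl fun y _ => ?_
    rw [List.ofFn_succ, List.prod_cons]
    simp [Fin.consEquiv]

/-- The column expansion sum with row function `f`. -/
def Efun (r : F) {n : ℕ} (a : Fin n → Fin n → R) (f : Fin n → Fin n) : R :=
  ∑ σ : Equiv.Perm (Fin n), (-r) ^ inversions σ • (List.ofFn fun m => a (f m) (σ m)).prod

lemma pair_term (r s : F) (hs : s ≠ 0) {n : ℕ} (a : Fin n → Fin n → R)
    (ha : IsQSemigroup r s a) {x y k l : Fin n} (hx : x < y) (hk : k < l) :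
    a y k * a x l - r • (a y l * a x k) =
      (-r) • (a x k * a y l - r • (a x l * a y k)) := by
  obtain ⟨h1, h2, h3, h4⟩ := ha
  have e3 := h3 x y k l hx hk
  have e4 := h4 x y k l hx hk
  have hyx : a y k * a x l = (r * s) • (a x l * a y k) := by
    calc a y k * a x l = s • s⁻¹ • (a y k * a x l) := by
          rw [smul_smul, mul_inv_cancel₀ hs, one_smul]
      _ = s • (r • (a x l * a y k)) := by rw [← e3]
      _ = (r * s) • (a x l * a y k) := by rw [smul_smul, mul_comm]
  have h5 : a y l * a x k = a x k * a y l - (r - s) • (a x l * a y k) := by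
    rw [← e4]; abel
  rw [hyx, h5]
  module

/-- The basic pairing identity. -/
lemma pairsum (r : F) {n : ℕ} (a : Fin n → Fin n → R) (f : Fin n → Fin n) (i j : Fin n)
    (hj : j.1 = i.1 + 1) (σ : Equiv.Perm (Fin n)) (hσ : σ i < σ j) :
    (-r) ^ inversions σ • (List.ofFn fun m => a (f m) (σ m)).prod +
      (-r) ^ inversions (σ * Equiv.swap i j) •
        (List.ofFn fun m => a (f m) ((σ * Equiv.swap i j) m)).prod =
    (-r) ^ inversions σ •
      (((List.ofFn fun m => a (f m) (σ m)).take i.1).prod *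
        ((a (f i) (σ i) * a (f j) (σ j) - r • (a (f i) (σ j) * a (f j) (σ i))) *
          ((List.ofFn fun m => a (f m) (σ m)).drop (i.1 + 2)).prod)) := by
  have hinv := inversions_mul_swap σ i j hj hσ
  have hfix : ∀ m : Fin n, m.1 < i.1 ∨ i.1 + 2 ≤ m.1 → (σ * Equiv.swap i j) m = σ m := by
    intro m hm
    have hmi : m ≠ i := by rintro rfl; omega
    have hmj : m ≠ j := by rintro rfl; omega
    simp [Equiv.Perm.mul_apply, Equiv.swap_apply_of_ne_of_ne hmi hmj]
  have htake : (List.ofFn fun m => a (f m) ((σ * Equiv.swap i j) m)).take i.1 =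
      (List.ofFn fun m => a (f m) (σ m)).take i.1 :=
    take_congr i _ _ fun m hm => by rw [hfix m (Or.inl hm)]
  have hdrop : (List.ofFn fun m => a (f m) ((σ * Equiv.swap i j) m)).drop (i.1 + 2) =
      (List.ofFn fun m => a (f m) (σ m)).drop (i.1 + 2) :=
    drop_congr (i.1 + 2) _ _ fun m hm => by rw [hfix m (Or.inr hm)]
  have hsi : (σ * Equiv.swap i j) i = σ j := by simp [Equiv.Perm.mul_apply]
  have hsj : (σ * Equiv.swap i j) j = σ i := by simp [Equiv.Perm.mul_apply]
  rw [listProd_split i j hj (fun m => a (f m) (σ m)),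
    listProd_split i j hj (fun m => a (f m) ((σ * Equiv.swap i j) m)),
    htake, hdrop, hsi, hsj, hinv, pow_succ]
  simp only [sub_mul, smul_mul_assoc, mul_sub, mul_smul_comm, mul_assoc]
  module

/-- If `f` takes equal values at two adjacent positions, the expansion vanishes. -/
lemma adj_eq (r s : F) (hs : s ≠ 0) {n : ℕ} (a : Fin n → Fin n → R)
    (ha : IsQSemigroup r s a) (f : Fin n → Fin n) (i j : Fin n)
    (hj : j.1 = i.1 + 1) (hf : f i = f j) : Efun r a f = 0 := by
  classical
  have hijne : i ≠ j := fun hc => by rw [hc] at hj; omega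
  have hpz : ∀ σ : Equiv.Perm (Fin n), σ i < σ j →
      (-r) ^ inversions σ • (List.ofFn fun m => a (f m) (σ m)).prod +
        (-r) ^ inversions (σ * Equiv.swap i j) •
          (List.ofFn fun m => a (f m) ((σ * Equiv.swap i j) m)).prod = 0 := by
    intro σ hσ
    rw [pairsum r a f i j hj σ hσ]
    have hz : a (f i) (σ i) * a (f j) (σ j) - r • (a (f i) (σ j) * a (f j) (σ i)) = 0 := by
      rw [hf]
      exact sub_eq_zero.mpr (ha.1 (f j) (σ i) (σ j) hσ)
    rw [hz, zero_mul, mul_zero, smul_zero]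
  unfold Efun
  apply Finset.sum_involution (g := fun σ _ => σ * Equiv.swap i j)
  · intro σ _
    rcases lt_or_gt_of_ne (fun hc : σ i = σ j => hijne (σ.injective hc)) with hlt | hgt
    · exact hpz σ hlt
    · have hlt' : (σ * Equiv.swap i j) i < (σ * Equiv.swap i j) j := by
        simpa [Equiv.Perm.mul_apply] using hgt
      have := hpz (σ * Equiv.swap i j) hlt'
      rw [mul_assoc, Equiv.swap_mul_self, mul_one] at this
      rw [add_comm]
      exact this
  · intro σ _ _
    intro hc
    have : Equiv.swap i j = 1 := by
      have := congrArg (fun ρ => σ⁻¹ * ρ) hc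
      simpa [← mul_assoc] using this
    exact hijne (Equiv.swap_eq_one_iff.mp this)
  · intro σ _; exact Finset.mem_univ _
  · intro σ _; rw [mul_assoc, Equiv.swap_mul_self, mul_one]


/-- Swapping the values of `f` at adjacent positions scales the expansion by `-r`. -/
lemma adj_swap (r s : F) (hs : s ≠ 0) {n : ℕ} (a : Fin n → Fin n → R)
    (ha : IsQSemigroup r s a) (f : Fin n → Fin n) (i j : Fin n)
    (hj : j.1 = i.1 + 1) (hf : f i < f j) :
    Efun r a (f ∘ Equiv.swap i j) = (-r) • Efun r a f := by
  classical
  have hijne : i ≠ j := fun hc => by rw [hc] at hj; omega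
  have hti : Equiv.swap i j i = j := Equiv.swap_apply_left i j
  have htj : Equiv.swap i j j = i := Equiv.swap_apply_right i j
  have H : Efun r a (f ∘ Equiv.swap i j) + r • Efun r a f = 0 := by
    unfold Efun
    rw [Finset.smul_sum, ← Finset.sum_add_distrib]
    have hpz : ∀ σ : Equiv.Perm (Fin n), σ i < σ j →
        ((-r) ^ inversions σ •
            (List.ofFn fun m => a ((f ∘ Equiv.swap i j) m) (σ m)).prod +
          r • ((-r) ^ inversions σ • (List.ofFn fun m => a (f m) (σ m)).prod)) +
        ((-r) ^ inversions (σ * Equiv.swap i j) •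
            (List.ofFn fun m => a ((f ∘ Equiv.swap i j) m) ((σ * Equiv.swap i j) m)).prod +
          r • ((-r) ^ inversions (σ * Equiv.swap i j) •
            (List.ofFn fun m => a (f m) ((σ * Equiv.swap i j) m)).prod)) = 0 := by
      intro σ hσ
      have P1 := pairsum r a f i j hj σ hσ
      have P2 := pairsum r a (f ∘ Equiv.swap i j) i j hj σ hσ
      have hftake : (List.ofFn fun m => a ((f ∘ Equiv.swap i j) m) (σ m)).take i.1 =
          (List.ofFn fun m => a (f m) (σ m)).take i.1 := by
        apply take_congr
        intro m hm
        have hmi : m ≠ i := by rintro rfl; omega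
        have hmj : m ≠ j := by rintro rfl; omega
        simp [Function.comp, Equiv.swap_apply_of_ne_of_ne hmi hmj]
      have hfdrop : (List.ofFn fun m => a ((f ∘ Equiv.swap i j) m) (σ m)).drop (i.1 + 2) =
          (List.ofFn fun m => a (f m) (σ m)).drop (i.1 + 2) := by
        apply drop_congr
        intro m hm
        have hmi : m ≠ i := by rintro rfl; omega
        have hmj : m ≠ j := by rintro rfl; omega
        simp [Function.comp, Equiv.swap_apply_of_ne_of_ne hmi hmj]
      have hfi : (f ∘ Equiv.swap i j) i = f j := by simp [Function.comp, hti]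
      have hfj : (f ∘ Equiv.swap i j) j = f i := by simp [Function.comp, htj]
      rw [hftake, hfdrop, hfi, hfj] at P2
      have hbr : a (f j) (σ i) * a (f i) (σ j) - r • (a (f j) (σ j) * a (f i) (σ i)) =
          (-r) • (a (f i) (σ i) * a (f j) (σ j) - r • (a (f i) (σ j) * a (f j) (σ i))) :=
        pair_term r s hs a ha hf hσ
      rw [hbr] at P2
      have hsum2 : (-r) ^ inversions σ •
            (List.ofFn fun m => a ((f ∘ Equiv.swap i j) m) (σ m)).prod +
          (-r) ^ inversions (σ * Equiv.swap i j) •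
            (List.ofFn fun m => a ((f ∘ Equiv.swap i j) m) ((σ * Equiv.swap i j) m)).prod =
          (-r) • ((-r) ^ inversions σ • (List.ofFn fun m => a (f m) (σ m)).prod +
            (-r) ^ inversions (σ * Equiv.swap i j) •
              (List.ofFn fun m => a (f m) ((σ * Equiv.swap i j) m)).prod) := by
        rw [P1, P2, smul_mul_assoc, mul_smul_comm, smul_comm]
      rw [show ∀ A B C D : R, (A + r • B) + (C + r • D) = (A + C) + r • (B + D) from
        fun A B C D => by rw [smul_add]; abel]
      rw [hsum2, neg_smul]
      exact neg_add_cancel _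
    apply Finset.sum_involution (g := fun σ _ => σ * Equiv.swap i j)
    · intro σ _
      rcases lt_or_gt_of_ne (fun hc : σ i = σ j => hijne (σ.injective hc)) with hlt | hgt
      · exact hpz σ hlt
      · have hlt' : (σ * Equiv.swap i j) i < (σ * Equiv.swap i j) j := by
          simpa [Equiv.Perm.mul_apply] using hgt
        have := hpz (σ * Equiv.swap i j) hlt'
        rw [mul_assoc, Equiv.swap_mul_self, mul_one] at this
        rw [add_comm]
        exact this
    · intro σ _ _
      intro hc
      have : Equiv.swap i j = 1 := by
        have := congrArg (fun ρ => σ⁻¹ * ρ) hc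
        simpa [← mul_assoc] using this
      exact hijne (Equiv.swap_eq_one_iff.mp this)
    · intro σ _; exact Finset.mem_univ _
    · intro σ _; rw [mul_assoc, Equiv.swap_mul_self, mul_one]
  rw [neg_smul]
  exact eq_neg_of_add_eq_zero_left H

lemma Efun_perm (r s : F) (hs : s ≠ 0) {n : ℕ} (a : Fin n → Fin n → R)
    (ha : IsQSemigroup r s a) (τ : Equiv.Perm (Fin n)) :
    Efun r a ⇑τ = (-r) ^ inversions τ • Efun r a id := by
  classical
  have H : ∀ k : ℕ, ∀ τ : Equiv.Perm (Fin n), inversions τ = k →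
      Efun r a ⇑τ = (-r) ^ inversions τ • Efun r a id := by
    intro k
    induction k using Nat.strong_induction_on with
    | _ k IH =>
      intro τ hk
      by_cases h1 : τ = 1
      · subst h1
        simp [inversions_one, Equiv.Perm.coe_one]
      · obtain ⟨i, j, hj, hd⟩ := exists_descent τ h1
        have hτt : (τ * Equiv.swap i j) * Equiv.swap i j = τ := by
          rw [mul_assoc, Equiv.swap_mul_self, mul_one]
        have hij : (τ * Equiv.swap i j) i < (τ * Equiv.swap i j) j := by
          simpa [Equiv.Perm.mul_apply] using hd
        have hinv : inversions τ = inversions (τ * Equiv.swap i j) + 1 := by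
          conv_lhs => rw [← hτt]
          exact inversions_mul_swap (τ * Equiv.swap i j) i j hj hij
        have IH' := IH (inversions (τ * Equiv.swap i j)) (by omega)
          (τ * Equiv.swap i j) rfl
        have hswap := adj_swap r s hs a ha (⇑(τ * Equiv.swap i j)) i j hj hij
        have hcoe : ⇑(τ * Equiv.swap i j) ∘ ⇑(Equiv.swap i j) = ⇑τ := by
          rw [← Equiv.Perm.coe_mul, hτt]
        rw [hcoe] at hswap
        rw [hswap, IH', hinv, smul_smul, pow_succ]
        ring_nf
  exact H (inversions τ) τ rfl

lemma Efun_zero (r s : F) (hr : r ≠ 0) (hs : s ≠ 0) {n : ℕ} (a : Fin n → Fin n → R)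
    (ha : IsQSemigroup r s a) (f : Fin n → Fin n) (hf : ¬ Function.Injective f) :
    Efun r a f = 0 := by
  classical
  have H : ∀ d : ℕ, ∀ (f : Fin n → Fin n) (p q : Fin n), p < q → f p = f q →
      q.1 - p.1 ≤ d → Efun r a f = 0 := by
    intro d
    induction d with
    | zero => intro f p q hpq _ hd; exact absurd (Fin.lt_def.mp hpq) (by omega)
    | succ d IH =>
      intro f p q hpq hfeq hd
      have hpq' := Fin.lt_def.mp hpq
      by_cases hadj : q.1 = p.1 + 1
      · exact adj_eq r s hs a ha f p q hadj hfeq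
      · have hq2 : p.1 + 2 ≤ q.1 := by omega
        have hin : q.1 - 1 < n := by omega
        set i : Fin n := ⟨q.1 - 1, hin⟩ with hidef
        have hj : q.1 = i.1 + 1 := by simp [hidef]; omega
        have hpi : p < i := Fin.lt_def.mpr (by simp [hidef]; omega)
        by_cases hfi : f i = f q
        · exact adj_eq r s hs a ha f i q hj hfi
        · have hpne_i : p ≠ i := fun hc => absurd (hc ▸ hpi) (lt_irrefl _)
          have hpne_q : p ≠ q := hpq.ne
          have hfp' : (f ∘ Equiv.swap i q) p = f p := by
            simp [Function.comp, Equiv.swap_apply_of_ne_of_ne hpne_i hpne_q]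
          have hfi' : (f ∘ Equiv.swap i q) i = f q := by
            simp [Function.comp, Equiv.swap_apply_left]
          have hfq' : (f ∘ Equiv.swap i q) q = f i := by
            simp [Function.comp, Equiv.swap_apply_right]
          have h0 : Efun r a (f ∘ Equiv.swap i q) = 0 := by
            apply IH (f ∘ Equiv.swap i q) p i hpi
            · rw [hfp', hfi', ← hfeq]
            · simp only [hidef]; omega
          rcases lt_or_gt_of_ne hfi with hlt | hgt
          · have := adj_swap r s hs a ha f i q hj hlt
            rw [h0] at this
            have := (smul_eq_zero.mp this.symm).resolve_left (neg_ne_zero.mpr hr)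
            exact this
          · have hlt' : (f ∘ Equiv.swap i q) i < (f ∘ Equiv.swap i q) q := by
              rw [hfi', hfq']; exact hgt
            have := adj_swap r s hs a ha (f ∘ Equiv.swap i q) i q hj hlt'
            rw [h0, smul_zero] at this
            have hff : (f ∘ Equiv.swap i q) ∘ ⇑(Equiv.swap i q) = f := by
              funext m
              simp [Function.comp, Equiv.swap_apply_self]
            rwa [hff] at this
  rw [Function.not_injective_iff] at hf
  obtain ⟨p, q, hfeq, hne⟩ := hf
  rcases lt_or_gt_of_ne hne with hlt | hgt
  · exact H (q.1 - p.1) f p q hlt hfeq le_rfl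
  · exact H (p.1 - q.1) f q p hgt hfeq.symm le_rfl

end QAux
end QAux



/-- In the bialgebra `𝒜_{r,s}(n)`, with comultiplication
`Δ(a_{ij}) = Σ_k a_{ik} ⊗ a_{kj}` and counit `ε(a_{ij}) = δ_{ij}`, the quantum
row-determinant is group-like: `Δ(rdet_r(A)) = rdet_r(A) ⊗ rdet_r(A)` and
`ε(rdet_r(A)) = 1`. -/
theorem rdet_isGroupLike {F : Type*} [Field F] (r s : F) (hr : r ≠ 0) (hs : s ≠ 0)
    {R : Type*} [Ring R] [Algebra F R] {n : ℕ} (a : Fin n → Fin n → R)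
    (ha : IsQSemigroup r s a)
    (Δ : R →ₐ[F] R ⊗[F] R) (hΔ : ∀ i j : Fin n, Δ (a i j) = ∑ k : Fin n, a i k ⊗ₜ[F] a k j)
    (ε : R →ₐ[F] F) (hε : ∀ i j : Fin n, ε (a i j) = if i = j then 1 else 0) :
    Δ (rdet r a) = rdet r a ⊗ₜ[F] rdet r a ∧ ε (rdet r a) = 1 := by
  classical
  constructor
  · have hEid : QAux.Efun r a id = rdet r a := rfl
    have step1 : Δ (rdet r a) = ∑ σ : Equiv.Perm (Fin n), (-r) ^ inversions σ •
        ∑ f : Fin n → Fin n, (List.ofFn fun i => a i (f i)).prod ⊗ₜ[F]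
          (List.ofFn fun i => a (f i) (σ i)).prod := by
      unfold rdet
      rw [map_sum]
      refine Finset.sum_congr rfl fun σ _ => ?_
      rw [map_smul]
      congr 1
      rw [map_list_prod, List.map_ofFn]
      have hcomp : (⇑Δ ∘ fun i => a i (σ i)) =
          fun i => ∑ k : Fin n, a i k ⊗ₜ[F] a k (σ i) := by
        funext i; exact hΔ i (σ i)
      rw [hcomp, QAux.prod_sum_expand (fun i k => a i k ⊗ₜ[F] a k (σ i))]
      exact Finset.sum_congr rfl fun f _ => QAux.tensor_ofFn_prod _ _
    have step2 : Δ (rdet r a) = ∑ f : Fin n → Fin n,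
        (List.ofFn fun i => a i (f i)).prod ⊗ₜ[F] QAux.Efun r a f := by
      rw [step1, Finset.sum_congr rfl fun (σ : Equiv.Perm (Fin n)) _ => Finset.smul_sum,
        Finset.sum_comm]
      refine Finset.sum_congr rfl fun f _ => ?_
      unfold QAux.Efun
      rw [TensorProduct.tmul_sum]
      exact Finset.sum_congr rfl fun σ _ => (TensorProduct.tmul_smul _ _ _).symm
    have hz : ∀ f : Fin n → Fin n, ¬ Function.Injective f →
        (List.ofFn fun i => a i (f i)).prod ⊗ₜ[F] QAux.Efun r a f = 0 := by
      intro f h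
      rw [QAux.Efun_zero r s hr hs a ha f h, TensorProduct.tmul_zero]
    have step3 : Δ (rdet r a) = ∑ f ∈ Finset.univ.filter
        (fun f : Fin n → Fin n => Function.Injective f),
        (List.ofFn fun i => a i (f i)).prod ⊗ₜ[F] QAux.Efun r a f := by
      rw [step2]
      exact (Finset.sum_subset (Finset.subset_univ _)
        (fun f _ hf => hz f (by simpa using hf))).symm
    have step4 : Δ (rdet r a) = ∑ τ : Equiv.Perm (Fin n),
        (List.ofFn fun i => a i (τ i)).prod ⊗ₜ[F] QAux.Efun r a ⇑τ := by
      rw [step3]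
      refine (Finset.sum_bij (fun (τ : Equiv.Perm (Fin n)) _ => ⇑τ) ?_ ?_ ?_ ?_).symm
      · intro τ _
        simp [Equiv.injective]
      · intro τ₁ _ τ₂ _ h
        exact Equiv.coe_fn_injective h
      · intro f hf
        have hinj : Function.Injective f := by simpa using hf
        have hbij : Function.Bijective f := (Finite.injective_iff_bijective).mp hinj
        exact ⟨Equiv.ofBijective f hbij, Finset.mem_univ _, rfl⟩
      · intro τ _; rfl
    rw [step4]
    have step5 : ∀ τ : Equiv.Perm (Fin n),
        (List.ofFn fun i => a i (τ i)).prod ⊗ₜ[F] QAux.Efun r a ⇑τ =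
          ((-r) ^ inversions τ • (List.ofFn fun i => a i (τ i)).prod) ⊗ₜ[F] rdet r a := by
      intro τ
      rw [QAux.Efun_perm r s hs a ha τ, hEid, TensorProduct.smul_tmul]
    rw [Finset.sum_congr rfl fun τ _ => step5 τ, ← TensorProduct.sum_tmul]
    rfl
  · unfold rdet
    rw [map_sum, Finset.sum_eq_single (1 : Equiv.Perm (Fin n))]
    · rw [map_smul, QAux.inversions_one, pow_zero, one_smul,
        map_list_prod, List.map_ofFn, List.prod_ofFn]
      have h1 : ∀ i : Fin n, (⇑ε ∘ fun i => a i ((1 : Equiv.Perm (Fin n)) i)) i = 1 := by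
        intro i; simp [hε]
      rw [Finset.prod_congr rfl fun i _ => h1 i, Finset.prod_const_one]
    · intro σ _ hσ
      obtain ⟨i0, hi0⟩ : ∃ i : Fin n, σ i ≠ i := by
        by_contra hcon
        push_neg at hcon
        exact hσ (Equiv.ext fun x => hcon x)
      rw [map_smul, map_list_prod, List.map_ofFn, List.prod_ofFn]
      have : (⇑ε ∘ fun i => a i (σ i)) i0 = 0 := by
        simp only [Function.comp_apply, hε]
        rw [if_neg (fun hc => hi0 hc.symm)]
      rw [Finset.prod_eq_zero (Finset.mem_univ i0) this, smul_zero]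
    · intro h
      exact absurd (Finset.mem_univ _) h
end

section
/- In the algebra 𝒜_{r,s}(n) ⊗ Λ(n) ⊗ Λ′(n), set ω_i = Σ_{j=1}^n a_{ji}·x_i·y_j and ω′_i = Σ_{j=1}^n a_{ij}·x_j·y_i for 1 ≤ i ≤ n. Then ω_i·ω_i = 0 and ω_j·ω_i = (r·s⁻¹)·ω_i·ω_j for all 1 ≤ i < j ≤ n, and likewise ω′_i·ω′_i = 0 and ω′_j·ω′_i = (r·s⁻¹)·ω′_i·ω′_j for all 1 ≤ i < j ≤ n. -/
open scoped TensorProduct Classical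

/-- Relations of the quantum exterior algebra: `x_i x_i = 0` and `x_j x_i = -r x_i x_j` for
`i < j`. -/
inductive ExtRel (F : Type*) [Field F] (r : F) (n : ℕ) :
    FreeAlgebra F (Fin n) → FreeAlgebra F (Fin n) → Prop
  | sq (i : Fin n) : ExtRel F r n (FreeAlgebra.ι F i * FreeAlgebra.ι F i) 0
  | swap (i j : Fin n) (h : i < j) :
      ExtRel F r n (FreeAlgebra.ι F j * FreeAlgebra.ι F i)
        ((-r) • (FreeAlgebra.ι F i * FreeAlgebra.ι F j))

/-- The quantum exterior algebra `Λ(n)` (for parameter `r`); taking the parameter `s⁻¹`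
yields `Λ′(n)`. -/
abbrev QExt (F : Type*) [Field F] (r : F) (n : ℕ) := RingQuot (ExtRel F r n)

/-- The generators `x_i` of the quantum exterior algebra. -/
noncomputable def qext (F : Type*) [Field F] (r : F) {n : ℕ} (i : Fin n) : QExt F r n :=
  RingQuot.mkAlgHom F (ExtRel F r n) (FreeAlgebra.ι F i)

lemma qext_sq {F : Type*} [Field F] (q : F) {n : ℕ} (i : Fin n) :
    qext F q i * qext F q i = 0 := by
  have h := RingQuot.mkAlgHom_rel F (ExtRel.sq (F := F) (r := q) (n := n) i)
  simpa [qext, map_mul] using h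

lemma qext_swap {F : Type*} [Field F] (q : F) {n : ℕ} {i j : Fin n} (h : i < j) :
    qext F q j * qext F q i = -(q • (qext F q i * qext F q j)) := by
  have h2 := RingQuot.mkAlgHom_rel F (ExtRel.swap (F := F) (r := q) (n := n) i j h)
  simpa [qext, map_mul, map_smul] using h2

set_option maxHeartbeats 1000000 in
/-- In `𝒜_{r,s}(n) ⊗ Λ(n) ⊗ Λ′(n)`, the elements
`ω_i = Σ_j a_{ji}·x_i·y_j` and `ω′_i = Σ_j a_{ij}·x_j·y_i` satisfy `ω_i² = 0`,
`ω_j ω_i = (rs⁻¹) ω_i ω_j` for `i < j`, and likewise for `ω′`. -/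
theorem omega_relations {F : Type*} [Field F] (r s : F) (hr : r ≠ 0) (hs : s ≠ 0)
    {R : Type*} [Ring R] [Algebra F R] {n : ℕ} (a : Fin n → Fin n → R)
    (ha : IsQSemigroup r s a) :
    (∀ i : Fin n,
      (∑ j : Fin n, (a j i ⊗ₜ[F] qext F r i) ⊗ₜ[F] qext F s⁻¹ j) *
        (∑ j : Fin n, (a j i ⊗ₜ[F] qext F r i) ⊗ₜ[F] qext F s⁻¹ j)
        = (0 : (R ⊗[F] QExt F r n) ⊗[F] QExt F s⁻¹ n)) ∧
    (∀ i j : Fin n, i < j →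
      (∑ k : Fin n, (a k j ⊗ₜ[F] qext F r j) ⊗ₜ[F] qext F s⁻¹ k) *
        (∑ k : Fin n, (a k i ⊗ₜ[F] qext F r i) ⊗ₜ[F] qext F s⁻¹ k)
        = (r * s⁻¹) • ((∑ k : Fin n, (a k i ⊗ₜ[F] qext F r i) ⊗ₜ[F] qext F s⁻¹ k) *
            (∑ k : Fin n, (a k j ⊗ₜ[F] qext F r j) ⊗ₜ[F] qext F s⁻¹ k))) ∧
    (∀ i : Fin n,
      (∑ j : Fin n, (a i j ⊗ₜ[F] qext F r j) ⊗ₜ[F] qext F s⁻¹ i) *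
        (∑ j : Fin n, (a i j ⊗ₜ[F] qext F r j) ⊗ₜ[F] qext F s⁻¹ i)
        = (0 : (R ⊗[F] QExt F r n) ⊗[F] QExt F s⁻¹ n)) ∧
    (∀ i j : Fin n, i < j →
      (∑ k : Fin n, (a j k ⊗ₜ[F] qext F r k) ⊗ₜ[F] qext F s⁻¹ j) *
        (∑ k : Fin n, (a i k ⊗ₜ[F] qext F r k) ⊗ₜ[F] qext F s⁻¹ i)
        = (r * s⁻¹) • ((∑ k : Fin n, (a i k ⊗ₜ[F] qext F r k) ⊗ₜ[F] qext F s⁻¹ i) *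
            (∑ k : Fin n, (a j k ⊗ₜ[F] qext F r k) ⊗ₜ[F] qext F s⁻¹ j))) := by
  obtain ⟨h1, h2, h3, h4⟩ := ha
  refine ⟨?_, ?_, ?_, ?_⟩
  · intro i
    rw [Finset.sum_mul_sum (R := (R ⊗[F] QExt F r n) ⊗[F] QExt F s⁻¹ n)]
    simp [Algebra.TensorProduct.tmul_mul_tmul, qext_sq]
  · intro i j hij
    rw [← sub_eq_zero, Finset.sum_mul_sum (R := (R ⊗[F] QExt F r n) ⊗[F] QExt F s⁻¹ n), Finset.sum_mul_sum (R := (R ⊗[F] QExt F r n) ⊗[F] QExt F s⁻¹ n), Finset.smul_sum]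
    simp only [Finset.smul_sum]
    rw [← Finset.sum_sub_distrib (G := (R ⊗[F] QExt F r n) ⊗[F] QExt F s⁻¹ n)]
    simp only [← Finset.sum_sub_distrib (G := (R ⊗[F] QExt F r n) ⊗[F] QExt F s⁻¹ n)]
    -- coefficient function
    set c : Fin n → Fin n → R := fun k l =>
      -(r • (a k j * a l i)) - (r * s⁻¹) • (a k i * a l j) with hc_def
    have expand : ∀ k l : Fin n,
        ((a k j ⊗ₜ[F] qext F r j) ⊗ₜ[F] qext F s⁻¹ k) *
            ((a l i ⊗ₜ[F] qext F r i) ⊗ₜ[F] qext F s⁻¹ l) -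
          (r * s⁻¹) • (((a k i ⊗ₜ[F] qext F r i) ⊗ₜ[F] qext F s⁻¹ k) *
            ((a l j ⊗ₜ[F] qext F r j) ⊗ₜ[F] qext F s⁻¹ l))
        = ((c k l ⊗ₜ[F] (qext F r i * qext F r j)) ⊗ₜ[F]
            (qext F s⁻¹ k * qext F s⁻¹ l)) := by
      intro k l
      rw [Algebra.TensorProduct.tmul_mul_tmul, Algebra.TensorProduct.tmul_mul_tmul,
        Algebra.TensorProduct.tmul_mul_tmul, Algebra.TensorProduct.tmul_mul_tmul,
        qext_swap r hij, hc_def]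
      simp only [TensorProduct.tmul_neg, TensorProduct.neg_tmul, TensorProduct.tmul_smul,
        TensorProduct.smul_tmul', TensorProduct.sub_tmul]
    simp only [expand]
    rw [← Finset.sum_product']
    have hdiag : ∀ k : Fin n,
        ((c k k ⊗ₜ[F] (qext F r i * qext F r j)) ⊗ₜ[F]
          (qext F s⁻¹ k * qext F s⁻¹ k)) = 0 := by
      intro k; rw [qext_sq]; simp
    have hpair : ∀ k l : Fin n, k < l →
        ((c k l ⊗ₜ[F] (qext F r i * qext F r j)) ⊗ₜ[F] (qext F s⁻¹ k * qext F s⁻¹ l)) +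
        ((c l k ⊗ₜ[F] (qext F r i * qext F r j)) ⊗ₜ[F] (qext F s⁻¹ l * qext F s⁻¹ k)) = 0 := by
      intro k l hkl
      rw [qext_swap s⁻¹ hkl]
      have hc : c k l - s⁻¹ • c l k = 0 := by
        have e1 : a l i * a k j = (s * r) • (a k j * a l i) := by
          have h3' := h3 k l i j hkl hij
          calc a l i * a k j = s • (s⁻¹ • (a l i * a k j)) := by
                rw [smul_smul, mul_inv_cancel₀ hs, one_smul]
            _ = s • (r • (a k j * a l i)) := by rw [← h3']
            _ = (s * r) • (a k j * a l i) := by rw [smul_smul]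
        have e2 : a k i * a l j = (r - s) • (a k j * a l i) + a l j * a k i :=
          sub_eq_iff_eq_add.mp (h4 k l i j hkl hij)
        rw [hc_def]
        simp only [e1, e2]
        match_scalars <;> field_simp <;> ring
      calc ((c k l ⊗ₜ[F] (qext F r i * qext F r j)) ⊗ₜ[F] (qext F s⁻¹ k * qext F s⁻¹ l)) +
            ((c l k ⊗ₜ[F] (qext F r i * qext F r j)) ⊗ₜ[F]
              (-(s⁻¹ • (qext F s⁻¹ k * qext F s⁻¹ l))))
          = (((c k l - s⁻¹ • c l k) ⊗ₜ[F] (qext F r i * qext F r j)) ⊗ₜ[F]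
              (qext F s⁻¹ k * qext F s⁻¹ l)) := by
            rw [TensorProduct.tmul_neg, TensorProduct.tmul_smul, TensorProduct.smul_tmul',
              TensorProduct.smul_tmul', ← sub_eq_add_neg (G := (R ⊗[F] QExt F r n) ⊗[F] QExt F s⁻¹ n), ← TensorProduct.sub_tmul,
              ← TensorProduct.sub_tmul]
        _ = 0 := by rw [hc]; simp
    refine Finset.sum_involution (fun p _ => (p.2, p.1)) ?_ ?_ (fun p hp => Finset.mem_univ _)
      (fun p hp => rfl)
    · intro p hp
      obtain ⟨k, l⟩ := p
      dsimp only
      rcases lt_trichotomy k l with h | h | h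
      · exact hpair k l h
      · subst h; rw [hdiag, zero_add]
      · rw [add_comm]; exact hpair l k h
    · intro p hp hne
      obtain ⟨k, l⟩ := p
      intro heq
      apply hne
      have hkl : l = k := by simpa using congrArg Prod.fst heq
      subst hkl
      simpa using hdiag l
  · intro i
    rw [Finset.sum_mul_sum (R := (R ⊗[F] QExt F r n) ⊗[F] QExt F s⁻¹ n)]
    simp [Algebra.TensorProduct.tmul_mul_tmul, qext_sq]
  · intro i j hij
    rw [← sub_eq_zero, Finset.sum_mul_sum (R := (R ⊗[F] QExt F r n) ⊗[F] QExt F s⁻¹ n), Finset.sum_mul_sum (R := (R ⊗[F] QExt F r n) ⊗[F] QExt F s⁻¹ n), Finset.smul_sum]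
    simp only [Finset.smul_sum]
    rw [← Finset.sum_sub_distrib (G := (R ⊗[F] QExt F r n) ⊗[F] QExt F s⁻¹ n)]
    simp only [← Finset.sum_sub_distrib (G := (R ⊗[F] QExt F r n) ⊗[F] QExt F s⁻¹ n)]
    set c : Fin n → Fin n → R := fun k l =>
      -(s⁻¹ • (a j k * a i l)) - (r * s⁻¹) • (a i k * a j l) with hc_def
    have expand : ∀ k l : Fin n,
        ((a j k ⊗ₜ[F] qext F r k) ⊗ₜ[F] qext F s⁻¹ j) *
            ((a i l ⊗ₜ[F] qext F r l) ⊗ₜ[F] qext F s⁻¹ i) -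
          (r * s⁻¹) • (((a i k ⊗ₜ[F] qext F r k) ⊗ₜ[F] qext F s⁻¹ i) *
            ((a j l ⊗ₜ[F] qext F r l) ⊗ₜ[F] qext F s⁻¹ j))
        = ((c k l ⊗ₜ[F] (qext F r k * qext F r l)) ⊗ₜ[F]
            (qext F s⁻¹ i * qext F s⁻¹ j)) := by
      intro k l
      rw [Algebra.TensorProduct.tmul_mul_tmul, Algebra.TensorProduct.tmul_mul_tmul,
        Algebra.TensorProduct.tmul_mul_tmul, Algebra.TensorProduct.tmul_mul_tmul,
        qext_swap s⁻¹ hij, hc_def]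
      simp only [TensorProduct.tmul_neg, TensorProduct.neg_tmul, TensorProduct.tmul_smul,
        TensorProduct.smul_tmul', TensorProduct.sub_tmul]
    simp only [expand]
    rw [← Finset.sum_product']
    have hdiag : ∀ k : Fin n,
        ((c k k ⊗ₜ[F] (qext F r k * qext F r k)) ⊗ₜ[F]
          (qext F s⁻¹ i * qext F s⁻¹ j)) = 0 := by
      intro k; rw [qext_sq]; simp
    have hpair : ∀ k l : Fin n, k < l →
        ((c k l ⊗ₜ[F] (qext F r k * qext F r l)) ⊗ₜ[F] (qext F s⁻¹ i * qext F s⁻¹ j)) +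
        ((c l k ⊗ₜ[F] (qext F r l * qext F r k)) ⊗ₜ[F] (qext F s⁻¹ i * qext F s⁻¹ j)) = 0 := by
      intro k l hkl
      rw [qext_swap r hkl]
      have hc : c k l - r • c l k = 0 := by
        have e1 : a j k * a i l = (s * r) • (a i l * a j k) := by
          have h3' := h3 i j k l hij hkl
          calc a j k * a i l = s • (s⁻¹ • (a j k * a i l)) := by
                rw [smul_smul, mul_inv_cancel₀ hs, one_smul]
            _ = s • (r • (a i l * a j k)) := by rw [← h3']
            _ = (s * r) • (a i l * a j k) := by rw [smul_smul]
        have e2 : a i k * a j l = (r - s) • (a i l * a j k) + a j l * a i k :=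
          sub_eq_iff_eq_add.mp (h4 i j k l hij hkl)
        rw [hc_def]
        simp only [e1, e2]
        match_scalars <;> field_simp <;> ring
      calc ((c k l ⊗ₜ[F] (qext F r k * qext F r l)) ⊗ₜ[F] (qext F s⁻¹ i * qext F s⁻¹ j)) +
            ((c l k ⊗ₜ[F] (-(r • (qext F r k * qext F r l)))) ⊗ₜ[F]
              (qext F s⁻¹ i * qext F s⁻¹ j))
          = (((c k l - r • c l k) ⊗ₜ[F] (qext F r k * qext F r l)) ⊗ₜ[F]
              (qext F s⁻¹ i * qext F s⁻¹ j)) := by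
            rw [TensorProduct.tmul_neg, TensorProduct.tmul_smul, TensorProduct.smul_tmul',
              TensorProduct.neg_tmul, ← sub_eq_add_neg (G := (R ⊗[F] QExt F r n) ⊗[F] QExt F s⁻¹ n), ← TensorProduct.sub_tmul,
              ← TensorProduct.sub_tmul]
        _ = 0 := by rw [hc]; simp
    refine Finset.sum_involution (fun p _ => (p.2, p.1)) ?_ ?_ (fun p hp => Finset.mem_univ _)
      (fun p hp => rfl)
    · intro p hp
      obtain ⟨k, l⟩ := p
      dsimp only
      rcases lt_trichotomy k l with h | h | h
      · exact hpair k l h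
      · subst h; rw [hdiag, zero_add]
      · rw [add_comm]; exact hpair l k h
    · intro p hp hne
      obtain ⟨k, l⟩ := p
      intro heq
      apply hne
      have hkl : l = k := by simpa using congrArg Prod.fst heq
      subst hkl
      simpa using hdiag l
end

section
/- Laplace expansion for the quantum row-determinant: in 𝒜_{r,s}(n), let (i_1,…,i_n) be a permutation of (1,…,n) with i_1 < ⋯ < i_t and i_{t+1} < ⋯ < i_n. Then rdet_r(A) = Σ (−r)^{(j_1+⋯+j_t)−(i_1+⋯+i_t)} · rdet_r(A^{i_1…i_t}_{j_1…j_t}) · rdet_r(A^{i_{t+1}…i_n}_{j_{t+1}…j_n}), where the sum is over all pairs of increasing sequences j_1 < ⋯ < j_t and j_{t+1} < ⋯ < j_n which together form a permutation of (1,…,n). -/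
open scoped TensorProduct Classical

noncomputable section QLapSection
namespace QLap

variable {F : Type*} [Field F] {R : Type*} [Ring R] [Algebra F R] {n : ℕ}

/-- number of elements of `S` smaller than `k` -/
def rk (S : Finset (Fin n)) (k : Fin n) : ℕ := (S.filter (· < k)).card

/-- crossing number -/
def crs (P Q : Finset (Fin n)) : ℕ := ∑ p ∈ P, rk Q p

def e0 : Finset (Fin n) → R := fun S => if S = ∅ then 1 else 0

def Xop (r : F) (a : Fin n → Fin n → R) (i : Fin n) (v : Finset (Fin n) → R) :
    Finset (Fin n) → R :=
  fun S => ∑ k ∈ S, (-r) ^ rk S k • (a i k * v (S.erase k))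

def Xw (r : F) (a : Fin n → Fin n → R) (L : List (Fin n)) (v : Finset (Fin n) → R) :
    Finset (Fin n) → R := L.foldr (Xop r a) v

def Xl (r : F) (a : Fin n → Fin n → R) (L : List (Fin n)) : Finset (Fin n) → R :=
  Xw r a L e0

lemma Xw_nil (r : F) (a : Fin n → Fin n → R) (v) : Xw r a [] v = v := rfl

lemma Xw_cons (r : F) (a : Fin n → Fin n → R) (i L v) :
    Xw r a (i :: L) v = Xop r a i (Xw r a L v) := rfl

lemma Xw_append (r : F) (a : Fin n → Fin n → R) (L1 L2 v) :
    Xw r a (L1 ++ L2) v = Xw r a L1 (Xw r a L2 v) := List.foldr_append ..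

lemma Xop_smul (r : F) (a : Fin n → Fin n → R) (i : Fin n) (c : F) (v) :
    Xop r a i (c • v) = c • Xop r a i v := by
  funext S
  simp only [Xop, Pi.smul_apply, Finset.smul_sum, mul_smul_comm, smul_comm c]

lemma Xw_smul (r : F) (a : Fin n → Fin n → R) (L) (c : F) (v) :
    Xw r a L (c • v) = c • Xw r a L v := by
  induction L with
  | nil => rfl
  | cons i L ih => rw [Xw_cons, ih, Xop_smul, Xw_cons]

lemma rk_erase_le {S : Finset (Fin n)} {l k : Fin n} (h : k ≤ l) :
    rk (S.erase l) k = rk S k := by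
  unfold rk
  congr 1
  ext m
  simp only [Finset.mem_filter, Finset.mem_erase]
  constructor
  · rintro ⟨⟨-, hm⟩, h2⟩; exact ⟨hm, h2⟩
  · rintro ⟨hm, h2⟩
    exact ⟨⟨fun e => absurd (e ▸ h2) (not_lt.2 (e ▸ h)), hm⟩, h2⟩

lemma rk_erase_lt {S : Finset (Fin n)} {k l : Fin n} (hk : k ∈ S) (h : k < l) :
    rk (S.erase k) l + 1 = rk S l := by
  unfold rk
  have : S.filter (· < l) = insert k ((S.erase k).filter (· < l)) := by
    ext m
    simp only [Finset.mem_filter, Finset.mem_insert, Finset.mem_erase]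
    constructor
    · rintro ⟨hm, h2⟩
      by_cases e : m = k
      · exact Or.inl e
      · exact Or.inr ⟨⟨e, hm⟩, h2⟩
    · rintro (rfl | ⟨⟨-, hm⟩, h2⟩)
      · exact ⟨hk, h⟩
      · exact ⟨hm, h2⟩
  rw [this, Finset.card_insert_of_notMem (by simp)]

lemma antisym_sum {g : Fin n → Fin n → R} (S : Finset (Fin n))
    (hg : ∀ k ∈ S, ∀ l ∈ S, k ≠ l → g k l + g l k = 0) :
    ∑ k ∈ S, ∑ l ∈ S.erase k, g k l = 0 := by
  rw [Finset.sum_sigma']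
  refine Finset.sum_involution (fun p hp => ⟨p.2, p.1⟩) ?_ ?_ ?_ ?_
  · rintro ⟨k, l⟩ hp
    simp only [Finset.mem_sigma, Finset.mem_erase] at hp
    exact hg k hp.1 l hp.2.2 (Ne.symm hp.2.1)
  · rintro ⟨k, l⟩ hp _
    simp only [Finset.mem_sigma, Finset.mem_erase] at hp
    intro h
    exact hp.2.1 (congrArg Sigma.fst h)
  · rintro ⟨k, l⟩ hp
    simp only [Finset.mem_sigma, Finset.mem_erase] at hp ⊢
    exact ⟨hp.2.2, Ne.symm hp.2.1, hp.1⟩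
  · rintro ⟨k, l⟩ _; rfl

lemma Xop_expand (r : F) (a : Fin n → Fin n → R) (p q : Fin n) (v) (S : Finset (Fin n)) :
    Xop r a p (Xop r a q v) S =
      ∑ k ∈ S, ∑ l ∈ S.erase k,
        (-r) ^ (rk S k + rk (S.erase k) l) •
          (a p k * (a q l * v ((S.erase k).erase l))) := by
  unfold Xop
  refine Finset.sum_congr rfl fun k hk => ?_
  rw [Finset.mul_sum, Finset.smul_sum]
  refine Finset.sum_congr rfl fun l hl => ?_
  rw [mul_smul_comm, smul_smul, ← pow_add]

lemma Xop_comm {r s : F} {a : Fin n → Fin n → R} (hs : s ≠ 0)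
    (ha : IsQSemigroup r s a) {i j : Fin n} (hij : i < j) (v) :
    Xop r a j (Xop r a i v) = (-r) • Xop r a i (Xop r a j v) := by
  funext S
  have key : ∀ k l : Fin n, k < l →
      a j k * a i l - r • (a j l * a i k) + r • (a i k * a j l) - (r * r) • (a i l * a j k)
        = 0 := by
    intro k l hkl
    obtain ⟨h1, h2, h3, h4⟩ := ha
    have e3 : a j k * a i l = (s * r) • (a i l * a j k) := by
      have h := h3 i j k l hij hkl
      calc a j k * a i l = s • (s⁻¹ • (a j k * a i l)) := by
            rw [smul_smul, mul_inv_cancel₀ hs, one_smul]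
        _ = (s * r) • (a i l * a j k) := by rw [← h, smul_smul]
    have e4 : a i k * a j l - a j l * a i k = (r - s) • (a i l * a j k) :=
      h4 i j k l hij hkl
    linear_combination (norm := module) e3 + (r : F) • e4
  have main : Xop r a j (Xop r a i v) S + r • Xop r a i (Xop r a j v) S = 0 := by
    rw [Xop_expand, Xop_expand, Finset.smul_sum]
    simp_rw [Finset.smul_sum]
    rw [← Finset.sum_add_distrib]
    simp_rw [← Finset.sum_add_distrib]
    refine antisym_sum S ?_
    intro k hk l hl hne
    have hsw : (S.erase l).erase k = (S.erase k).erase l := Finset.erase_right_comm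
    rcases lt_or_gt_of_ne hne with hkl | hlk
    · have hrk1 : rk S l + rk (S.erase l) k = rk S k + rk (S.erase k) l + 1 := by
        rw [rk_erase_le hkl.le, ← rk_erase_lt hk hkl]; ring
      rw [hsw, hrk1]
      have keyW := congrArg (· * v ((S.erase k).erase l)) (key k l hkl)
      simp only [sub_mul, add_mul, smul_mul_assoc, zero_mul, mul_assoc] at keyW
      linear_combination (norm := module) ((-r) ^ (rk S k + rk (S.erase k) l) : F) • keyW
    · have hrk1 : rk S k + rk (S.erase k) l = rk S l + rk (S.erase l) k + 1 := by
        rw [rk_erase_le hlk.le, ← rk_erase_lt hl hlk]; ring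
      rw [hsw, hrk1]
      have keyW := congrArg (· * v ((S.erase k).erase l)) (key l k hlk)
      simp only [sub_mul, add_mul, smul_mul_assoc, zero_mul, mul_assoc] at keyW
      linear_combination (norm := module) ((-r) ^ (rk S l + rk (S.erase l) k) : F) • keyW
  have h0 := eq_neg_of_add_eq_zero_left main
  rw [h0, Pi.smul_apply, neg_smul]

lemma Xw_swap {r s : F} {a : Fin n → Fin n → R} (hs : s ≠ 0)
    (ha : IsQSemigroup r s a) {i j : Fin n} (hij : i < j) (L1 L2 : List (Fin n)) (v) :
    Xw r a (L1 ++ j :: i :: L2) v = (-r) • Xw r a (L1 ++ i :: j :: L2) v := by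
  rw [Xw_append, Xw_append]
  have : Xw r a (j :: i :: L2) v = (-r) • Xw r a (i :: j :: L2) v := by
    rw [Xw_cons, Xw_cons, Xw_cons, Xw_cons, Xop_comm hs ha hij]
  rw [this, Xw_smul]

/-- the sorted list of a finset -/
def sl (Q : Finset (Fin n)) : List (Fin n) := Q.sort (· ≤ ·)

lemma sl_min {Q : Finset (Fin n)} {q : Fin n} (hq : q ∈ Q) (hmin : ∀ b ∈ Q, q ≤ b) :
    sl Q = q :: sl (Q.erase q) := by
  conv_lhs => rw [← Finset.insert_erase hq]
  exact Finset.sort_insert (· ≤ ·) (fun b hb => hmin b (Finset.mem_of_mem_erase hb))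
    (Finset.notMem_erase q Q)

lemma ins_sorted {r s : F} {a : Fin n → Fin n → R} (hs : s ≠ 0)
    (ha : IsQSemigroup r s a) (v) :
    ∀ (Q : Finset (Fin n)) (i : Fin n), i ∉ Q →
      Xw r a (i :: sl Q) v = (-r) ^ rk Q i • Xw r a (sl (insert i Q)) v := by
  intro Q
  induction Q using Finset.strongInduction with
  | _ Q ih =>
    intro i hi
    by_cases hQ : ∀ q ∈ Q, i < q
    · have h0 : rk Q i = 0 := by
        unfold rk
        rw [Finset.card_eq_zero, Finset.filter_eq_empty_iff]
        intro q hq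
        exact not_lt.2 (hQ q hq).le
      have : sl (insert i Q) = i :: sl Q :=
        Finset.sort_insert (· ≤ ·) (fun b hb => (hQ b hb).le) hi
      rw [this, h0, pow_zero, one_smul]
    · push_neg at hQ
      obtain ⟨q0, hq0, hq0i⟩ := hQ
      have hQne : Q.Nonempty := ⟨q0, hq0⟩
      set q := Q.min' hQne with hqdef
      have hqQ : q ∈ Q := Q.min'_mem hQne
      have hqle : ∀ b ∈ Q, q ≤ b := fun b hb => Q.min'_le b hb
      have hqi : q < i := by
        have h1 : q ≤ q0 := hqle q0 hq0
        have h2 : q0 < i := lt_of_le_of_ne hq0i (fun e => hi (e ▸ hq0))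
        exact lt_of_le_of_lt h1 h2
      have hslQ : sl Q = q :: sl (Q.erase q) := sl_min hqQ hqle
      have hiq : i ∉ Q.erase q := fun h => hi (Finset.mem_of_mem_erase h)
      have step1 : Xw r a (i :: sl Q) v
          = (-r) • Xw r a (q :: i :: sl (Q.erase q)) v := by
        rw [hslQ]
        exact Xw_swap hs ha hqi [] (sl (Q.erase q)) v
      have step2 : Xw r a (q :: i :: sl (Q.erase q)) v
          = (-r) ^ rk (Q.erase q) i • Xw r a (q :: sl (insert i (Q.erase q))) v := by
        have h2 := ih (Q.erase q) (Finset.erase_ssubset hqQ) i hiq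
        rw [Xw_cons, h2, Xop_smul]
        rfl
      have hset : insert q (insert i (Q.erase q)) = insert i Q := by
        rw [Finset.insert_comm, Finset.insert_erase hqQ]
      have step3 : q :: sl (insert i (Q.erase q)) = sl (insert i Q) := by
        rw [← hset]
        refine (Finset.sort_insert (· ≤ ·) ?_ ?_).symm
        · intro b hb
          rcases Finset.mem_insert.1 hb with rfl | hb
          · exact hqi.le
          · exact hqle b (Finset.mem_of_mem_erase hb)
        · intro h
          rcases Finset.mem_insert.1 h with e | h
          · exact absurd e hqi.ne
          · exact (Finset.notMem_erase q Q) h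
      have hrk : rk Q i = rk (Q.erase q) i + 1 := (rk_erase_lt hqQ hqi).symm
      rw [step1, step2, step3, hrk, smul_smul, pow_succ, mul_comm]

lemma rk_union {P Q : Finset (Fin n)} (h : Disjoint P Q) (i : Fin n) :
    rk (P ∪ Q) i = rk P i + rk Q i := by
  unfold rk
  rw [Finset.filter_union, Finset.card_union_of_disjoint
    (Finset.disjoint_filter_filter h)]

lemma concat_sorted {r s : F} {a : Fin n → Fin n → R} (hs : s ≠ 0)
    (ha : IsQSemigroup r s a) (v) :
    ∀ (P Q : Finset (Fin n)), Disjoint P Q →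
      Xw r a (sl P ++ sl Q) v = (-r) ^ crs P Q • Xw r a (sl (P ∪ Q)) v := by
  intro P
  induction P using Finset.strongInduction with
  | _ P ih =>
    intro Q hPQ
    rcases P.eq_empty_or_nonempty with rfl | hPne
    · simp only [sl, Finset.sort_empty, List.nil_append, crs, Finset.sum_empty, pow_zero,
        one_smul, Finset.empty_union]
    · set p := P.min' hPne with hpdef
      have hpP : p ∈ P := P.min'_mem hPne
      have hple : ∀ b ∈ P, p ≤ b := fun b hb => P.min'_le b hb
      have hslP : sl P = p :: sl (P.erase p) := sl_min hpP hple
      have hpQ : p ∉ Q := Finset.disjoint_left.1 hPQ hpP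
      have hdisj' : Disjoint (P.erase p) Q :=
        Finset.disjoint_of_subset_left (Finset.erase_subset p P) hPQ
      have hpPQ : p ∉ P.erase p ∪ Q := by
        rw [Finset.mem_union]
        rintro (h | h)
        · exact Finset.notMem_erase p P h
        · exact hpQ h
      rw [hslP]
      have : (p :: sl (P.erase p)) ++ sl Q = p :: (sl (P.erase p) ++ sl Q) := rfl
      rw [this, Xw_cons, ih (P.erase p) (Finset.erase_ssubset hpP) Q hdisj', Xop_smul,
        ← Xw_cons, ins_sorted hs ha v _ p hpPQ, smul_smul]
      have hset : insert p (P.erase p ∪ Q) = P ∪ Q := by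
        rw [← Finset.insert_union, Finset.insert_erase hpP]
      rw [hset]
      congr 1
      rw [rk_union hdisj' p, ← pow_add]
      congr 1
      have hrkP : rk (P.erase p) p = 0 := by
        unfold rk
        rw [Finset.card_eq_zero, Finset.filter_eq_empty_iff]
        intro q hq
        exact not_lt.2 (hple q (Finset.mem_of_mem_erase hq))
      have hcrs : crs P Q = rk Q p + crs (P.erase p) Q := by
        unfold crs
        rw [← Finset.sum_erase_add P _ hpP, add_comm]
      rw [hrkP, zero_add, hcrs, add_comm]

lemma Xl_dim (r : F) (a : Fin n → Fin n → R) :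
    ∀ (L : List (Fin n)) (S : Finset (Fin n)), S.card ≠ L.length → Xl r a L S = 0 := by
  intro L
  induction L with
  | nil =>
    intro S hS
    simp only [List.length_nil] at hS
    have : S ≠ ∅ := fun e => hS (by simp [e])
    simp [Xl, Xw, e0, this]
  | cons i L ih =>
    intro S hS
    simp only [List.length_cons] at hS
    show Xop r a i (Xl r a L) S = 0
    unfold Xop
    refine Finset.sum_eq_zero fun k hk => ?_
    rw [ih (S.erase k) ?_, mul_zero, smul_zero]
    rw [Finset.card_erase_of_mem hk]
    intro h
    apply hS
    have : 1 ≤ S.card := Finset.card_pos.2 ⟨k, hk⟩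
    omega

/-- decompose a permutation of `Fin (m+1)` into its value at `0` and a permutation of `Fin m` -/
def buildPerm {m : ℕ} (k : Fin (m + 1)) (τ : Equiv.Perm (Fin m)) : Equiv.Perm (Fin (m + 1)) :=
  ((finSuccEquiv' 0).trans (Equiv.optionCongr τ)).trans (finSuccEquiv' k).symm

lemma buildPerm_zero {m : ℕ} (k : Fin (m + 1)) (τ : Equiv.Perm (Fin m)) :
    buildPerm k τ 0 = k := by
  simp [buildPerm, finSuccEquiv'_at]

lemma buildPerm_succ {m : ℕ} (k : Fin (m + 1)) (τ : Equiv.Perm (Fin m)) (j : Fin m) :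
    buildPerm k τ j.succ = k.succAbove (τ j) := by
  have h : (finSuccEquiv' (0 : Fin (m + 1))) j.succ = some j := by
    rw [← Fin.succAbove_zero_apply, finSuccEquiv'_succAbove]
  simp [buildPerm, h]

lemma buildPerm_bijective {m : ℕ} :
    Function.Bijective (fun p : Fin (m + 1) × Equiv.Perm (Fin m) => buildPerm p.1 p.2) := by
  rw [Fintype.bijective_iff_injective_and_card]
  constructor
  · rintro ⟨k, τ⟩ ⟨k', τ'⟩ h
    simp only at h
    have h0 : k = k' := by rw [← buildPerm_zero k τ, ← buildPerm_zero k' τ', h]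
    subst h0
    have : τ = τ' := by
      ext j
      have := congrArg (fun σ : Equiv.Perm (Fin (m + 1)) => σ j.succ) h
      simp only [buildPerm_succ] at this
      exact congrArg Fin.val (Fin.succAbove_right_injective this)
    rw [this]
  · simp [Fintype.card_perm, Nat.factorial_succ]

lemma sum_perm_decompose {m : ℕ} {M : Type*} [AddCommMonoid M]
    (f : Equiv.Perm (Fin (m + 1)) → M) :
    ∑ σ : Equiv.Perm (Fin (m + 1)), f σ =
      ∑ k : Fin (m + 1), ∑ τ : Equiv.Perm (Fin m), f (buildPerm k τ) := by
  rw [← Fintype.sum_bijective _ buildPerm_bijective _ f (fun p => rfl)]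
  rw [Fintype.sum_prod_type]

lemma inversions_buildPerm {m : ℕ} (k : Fin (m + 1)) (τ : Equiv.Perm (Fin m)) :
    inversions (buildPerm k τ) = k + inversions τ := by
  classical
  set σ := buildPerm k τ with hσ
  have hA : (Finset.univ.filter fun p : Fin (m + 1) × Fin (m + 1) =>
        p.1 < p.2 ∧ σ p.2 < σ p.1) =
      ((Finset.univ.filter fun y : Fin m => Fin.castSucc (τ y) < k).image
          fun y => ((0 : Fin (m + 1)), y.succ)) ∪
        ((Finset.univ.filter fun p : Fin m × Fin m => p.1 < p.2 ∧ τ p.2 < τ p.1).image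
          fun p => (p.1.succ, p.2.succ)) := by
    ext ⟨x, y⟩
    simp only [Finset.mem_filter, Finset.mem_union, Finset.mem_image, Finset.mem_univ,
      true_and, Prod.mk.injEq, Prod.exists]
    constructor
    · rintro ⟨hxy, hσ⟩
      rcases Fin.eq_zero_or_eq_succ x with rfl | ⟨x', rfl⟩
      · rcases Fin.eq_zero_or_eq_succ y with rfl | ⟨y', rfl⟩
        · exact absurd hxy (lt_irrefl 0)
        · left
          refine ⟨y', ?_, rfl, rfl⟩
          rw [buildPerm_succ, buildPerm_zero] at hσ
          exact (Fin.succAbove_lt_iff_castSucc_lt k (τ y')).1 hσ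
      · rcases Fin.eq_zero_or_eq_succ y with rfl | ⟨y', rfl⟩
        · exact absurd hxy (by simp [Fin.lt_iff_val_lt_val])
        · right
          refine ⟨x', y', ⟨?_, ?_⟩, rfl, rfl⟩
          · exact Fin.succ_lt_succ_iff.1 hxy
          · rw [buildPerm_succ, buildPerm_succ] at hσ
            exact (Fin.succAbove_lt_succAbove_iff).1 hσ
    · rintro (⟨y', hy', rfl, rfl⟩ | ⟨x', y', ⟨h1, h2⟩, rfl, rfl⟩)
      · refine ⟨Fin.succ_pos y', ?_⟩
        rw [buildPerm_succ, buildPerm_zero]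
        exact (Fin.succAbove_lt_iff_castSucc_lt k (τ y')).2 hy'
      · refine ⟨Fin.succ_lt_succ_iff.2 h1, ?_⟩
        rw [buildPerm_succ, buildPerm_succ]
        exact (Fin.succAbove_lt_succAbove_iff).2 h2
  have hdisj : Disjoint
      ((Finset.univ.filter fun y : Fin m => Fin.castSucc (τ y) < k).image
          fun y => ((0 : Fin (m + 1)), y.succ))
      ((Finset.univ.filter fun p : Fin m × Fin m => p.1 < p.2 ∧ τ p.2 < τ p.1).image
          fun p => (p.1.succ, p.2.succ)) := by
    rw [Finset.disjoint_left]
    rintro ⟨x, y⟩ h1 h2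
    simp only [Finset.mem_image, Prod.mk.injEq] at h1 h2
    obtain ⟨y', -, hy1, -⟩ := h1
    obtain ⟨p, -, hp1, -⟩ := h2
    rw [← hy1] at hp1
    exact Fin.succ_ne_zero p.1 hp1
  have hcard1 : ((Finset.univ.filter fun y : Fin m => Fin.castSucc (τ y) < k).image
      fun y => ((0 : Fin (m + 1)), y.succ)).card = (k : ℕ) := by
    rw [Finset.card_image_of_injective _ (fun u v h => Fin.succ_injective m
      (congrArg Prod.snd h))]
    have h1 : (Finset.univ.filter fun y : Fin m => Fin.castSucc (τ y) < k).card =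
        (Finset.univ.filter fun z : Fin m => Fin.castSucc z < k).card := by
      refine Finset.card_nbij' (fun y => τ y) (fun z => τ.symm z) ?_ ?_ ?_ ?_
      · intro y hy
        simp only [Finset.mem_coe, Finset.mem_filter, Finset.mem_univ, true_and] at hy ⊢
        exact hy
      · intro z hz
        simp only [Finset.mem_coe, Finset.mem_filter, Finset.mem_univ, true_and,
          Equiv.apply_symm_apply] at hz ⊢
        exact hz
      · intro y _; simp
      · intro z _; simp
    rw [h1]
    have h2 : (Finset.univ.filter fun z : Fin m => Fin.castSucc z < k).card =
        (Finset.range (k : ℕ)).card := by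
      refine Finset.card_nbij (fun z => (z : ℕ)) ?_ ?_ ?_
      · intro z hz
        simp only [Finset.mem_coe, Finset.mem_filter, Finset.mem_univ, true_and] at hz
        simp only [Finset.mem_coe, Finset.mem_range]
        exact hz
      · intro z1 h1 z2 h2 h
        exact Fin.val_injective h
      · intro w hw
        simp only [Finset.mem_coe, Finset.mem_range] at hw
        have hwm : w < m := by
          have : (k : ℕ) ≤ m := Nat.lt_succ_iff.1 k.isLt
          omega
        refine ⟨⟨w, hwm⟩, ?_, rfl⟩
        simpa [Fin.lt_iff_val_lt_val, Finset.mem_coe] using hw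
    rw [h2, Finset.card_range]
  have hcard2 : ((Finset.univ.filter fun p : Fin m × Fin m =>
      p.1 < p.2 ∧ τ p.2 < τ p.1).image fun p => (p.1.succ, p.2.succ)).card = inversions τ := by
    rw [Finset.card_image_of_injective]
    · rfl
    · rintro ⟨u1, u2⟩ ⟨v1, v2⟩ h
      simp only [Prod.mk.injEq] at h
      exact Prod.ext (Fin.succ_injective m h.1) (Fin.succ_injective m h.2)
  unfold inversions
  rw [hA, Finset.card_union_of_disjoint hdisj, hcard1, hcard2]
  rfl

lemma card_filter_val_lt (m c : ℕ) (hc : c ≤ m) :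
    (Finset.univ.filter fun z : Fin m => (z : ℕ) < c).card = c := by
  have h : (Finset.univ.filter fun z : Fin m => (z : ℕ) < c).card =
      (Finset.range c).card := by
    refine Finset.card_nbij (fun z => (z : ℕ)) ?_ ?_ ?_
    · intro z hz
      simp only [Finset.mem_coe, Finset.mem_filter, Finset.mem_univ, true_and] at hz
      simpa using hz
    · intro z1 _ z2 _ h
      exact Fin.val_injective h
    · intro w hw
      simp only [Finset.mem_coe, Finset.mem_range] at hw
      refine ⟨⟨w, lt_of_lt_of_le hw hc⟩, ?_, rfl⟩
      simpa using hw
  rw [h, Finset.card_range]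

lemma rk_orderEmb {S : Finset (Fin n)} {m : ℕ} (hS : S.card = m) (k : Fin m) :
    rk S (S.orderEmbOfFin hS k) = (k : ℕ) := by
  set f := S.orderEmbOfFin hS with hf
  have himg : S.filter (· < f k) =
      (Finset.univ.filter fun j : Fin m => j < k).image f := by
    ext x
    simp only [Finset.mem_filter, Finset.mem_image, Finset.mem_univ, true_and]
    constructor
    · rintro ⟨hxS, hxlt⟩
      have : x ∈ Set.range f := by rw [Finset.range_orderEmbOfFin]; exact hxS
      obtain ⟨j, rfl⟩ := this
      exact ⟨j, (OrderEmbedding.lt_iff_lt f).1 hxlt, rfl⟩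
    · rintro ⟨j, hj, rfl⟩
      exact ⟨Finset.orderEmbOfFin_mem S hS j, (OrderEmbedding.lt_iff_lt f).2 hj⟩
  unfold rk
  rw [himg, Finset.card_image_of_injective _ f.injective]
  have heq : (Finset.univ.filter fun j : Fin m => j < k) =
      (Finset.univ.filter fun j : Fin m => (j : ℕ) < (k : ℕ)) := rfl
  rw [heq, card_filter_val_lt m k k.isLt.le]

lemma erase_orderEmb {S : Finset (Fin n)} {m : ℕ} (hS : S.card = m + 1) (k : Fin (m + 1))
    (h' : (S.erase (S.orderEmbOfFin hS k)).card = m) (j : Fin m) :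
    (S.erase (S.orderEmbOfFin hS k)).orderEmbOfFin h' j =
      S.orderEmbOfFin hS (k.succAbove j) := by
  set f := S.orderEmbOfFin hS with hf
  have hmono : StrictMono (fun j : Fin m => f (k.succAbove j)) :=
    f.strictMono.comp (Fin.strictMono_succAbove k)
  have hmem : ∀ j : Fin m, f (k.succAbove j) ∈ S.erase (f k) := by
    intro j
    rw [Finset.mem_erase]
    exact ⟨fun h => Fin.succAbove_ne k j (f.injective h), Finset.orderEmbOfFin_mem S hS _⟩
  have := Finset.orderEmbOfFin_unique h' hmem hmono
  exact (congrFun this j).symm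

lemma inversions_zero (τ : Equiv.Perm (Fin 0)) : inversions τ = 0 := by
  unfold inversions
  rw [Finset.univ_eq_empty, Finset.filter_empty, Finset.card_empty]

lemma Xl_formula (r : F) (a : Fin n → Fin n → R) :
    ∀ (L : List (Fin n)) (S : Finset (Fin n)) (hS : S.card = L.length),
      Xl r a L S = ∑ τ : Equiv.Perm (Fin L.length), (-r) ^ inversions τ •
        (List.ofFn fun p => a (L.get p) (S.orderEmbOfFin hS (τ p))).prod := by
  intro L
  induction L with
  | nil =>
    intro S hS
    simp only [List.length_nil] at hS
    have h0 : S = ∅ := Finset.card_eq_zero.1 hS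
    subst h0
    simp only [List.length_nil]
    have hXl : Xl r a [] (∅ : Finset (Fin n)) = 1 := by simp [Xl, Xw, e0]
    rw [hXl]
    have hterm : ∀ τ : Equiv.Perm (Fin 0), (-r) ^ inversions τ •
        (List.ofFn fun p : Fin 0 => a ([].get p)
          ((∅ : Finset (Fin n)).orderEmbOfFin hS (τ p))).prod = (1 : R) := by
      intro τ
      rw [inversions_zero, pow_zero, List.ofFn_zero, List.prod_nil, one_smul]
    rw [Finset.sum_congr rfl fun τ _ => hterm τ, Finset.sum_const, Finset.card_univ]
    have : Fintype.card (Equiv.Perm (Fin 0)) = 1 := by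
      rw [Fintype.card_perm]; simp
    rw [this, one_smul]
  | cons i L ih =>
    intro S hS
    set m := L.length with hm
    have hS' : S.card = m + 1 := hS
    set f := S.orderEmbOfFin hS' with hf
    have hmap : S = Finset.univ.map ⟨f, f.injective⟩ := by
      ext x
      simp only [Finset.mem_map, Finset.mem_univ, true_and, Function.Embedding.coeFn_mk]
      constructor
      · intro hx
        have : x ∈ Set.range f := by rw [Finset.range_orderEmbOfFin]; exact hx
        obtain ⟨j, rfl⟩ := this
        exact ⟨j, rfl⟩
      · rintro ⟨j, rfl⟩
        exact Finset.orderEmbOfFin_mem S hS' j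
    show Xop r a i (Xl r a L) S = _
    simp only [List.length_cons]
    unfold Xop
    rw [show (∑ k ∈ S, (-r) ^ rk S k • (a i k * Xl r a L (S.erase k))) =
        ∑ k₀ : Fin (m + 1), (-r) ^ rk S (f k₀) • (a i (f k₀) * Xl r a L (S.erase (f k₀)))
      from by rw [hmap, Finset.sum_map]; rfl]
    have hcard' : ∀ k₀ : Fin (m + 1), (S.erase (f k₀)).card = m := by
      intro k₀
      rw [Finset.card_erase_of_mem (Finset.orderEmbOfFin_mem S hS' k₀), hS']
      omega
    have hinner : ∀ k₀ : Fin (m + 1),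
        Xl r a L (S.erase (f k₀)) = ∑ τ : Equiv.Perm (Fin m), (-r) ^ inversions τ •
          (List.ofFn fun p => a (L.get p) (f (k₀.succAbove (τ p)))).prod := by
      intro k₀
      rw [ih (S.erase (f k₀)) (hcard' k₀)]
      refine Finset.sum_congr rfl fun τ _ => ?_
      congr 1
      refine congrArg List.prod (congrArg List.ofFn (funext fun p => ?_))
      rw [erase_orderEmb hS' k₀ (hcard' k₀) (τ p)]
    conv_rhs => rw [sum_perm_decompose]
    refine Finset.sum_congr rfl fun k₀ _ => ?_
    rw [hinner, Finset.mul_sum, Finset.smul_sum]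
    refine Finset.sum_congr rfl fun τ _ => ?_
    rw [rk_orderEmb hS' k₀, inversions_buildPerm, mul_smul_comm, smul_smul, ← pow_add]
    congr 1
    have hzero : buildPerm k₀ τ 0 = k₀ := buildPerm_zero k₀ τ
    rw [List.ofFn_succ, List.prod_cons, hzero]
    congr 1

lemma rk_insert_self (S : Finset (Fin n)) (k : Fin n) : rk (insert k S) k = rk S k := by
  unfold rk
  rw [Finset.filter_insert, if_neg (lt_irrefl k)]

lemma Xl_split (r : F) (a : Fin n → Fin n → R) :
    ∀ (L1 L2 : List (Fin n)) (S : Finset (Fin n)),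
      Xl r a (L1 ++ L2) S = ∑ S1 ∈ S.powerset,
        (-r) ^ crs S1 (S \ S1) • (Xl r a L1 S1 * Xl r a L2 (S \ S1)) := by
  intro L1
  induction L1 with
  | nil =>
    intro L2 S
    rw [List.nil_append]
    have hEmpty : (-r) ^ crs (∅ : Finset (Fin n)) (S \ ∅) •
        (Xl r a [] ∅ * Xl r a L2 (S \ ∅)) = Xl r a L2 S := by
      have h1 : crs (∅ : Finset (Fin n)) (S \ ∅) = 0 := Finset.sum_empty
      have h2 : Xl r a [] (∅ : Finset (Fin n)) = 1 := by simp [Xl, Xw, e0]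
      rw [h1, h2, pow_zero, one_smul, one_mul, Finset.sdiff_empty]
    rw [Finset.sum_eq_single_of_mem ∅ (Finset.empty_mem_powerset S) ?_, hEmpty]
    intro S1 _ hne
    have h2 : Xl r a [] S1 = 0 := by simp [Xl, Xw, e0, hne]
    rw [h2, zero_mul, smul_zero]
  | cons i L1 ih =>
    intro L2 S
    have hLHS : Xl r a ((i :: L1) ++ L2) S =
        ∑ p ∈ S.sigma (fun k => (S.erase k).powerset),
          (-r) ^ (rk S p.1 + crs p.2 ((S.erase p.1) \ p.2)) •
            (a i p.1 * (Xl r a L1 p.2 * Xl r a L2 ((S.erase p.1) \ p.2))) := by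
      show Xop r a i (Xl r a (L1 ++ L2)) S = _
      unfold Xop
      rw [Finset.sum_sigma]
      refine Finset.sum_congr rfl fun k hk => ?_
      rw [ih L2 (S.erase k), Finset.mul_sum, Finset.smul_sum]
      refine Finset.sum_congr rfl fun S1' hS1' => ?_
      rw [mul_smul_comm, smul_smul, ← pow_add]
    have hRHS : ∑ S1 ∈ S.powerset, (-r) ^ crs S1 (S \ S1) •
          (Xl r a (i :: L1) S1 * Xl r a L2 (S \ S1)) =
        ∑ p ∈ S.powerset.sigma (fun S1 => S1),
          (-r) ^ (crs p.1 (S \ p.1) + rk p.1 p.2) •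
            (a i p.2 * (Xl r a L1 (p.1.erase p.2) * Xl r a L2 (S \ p.1))) := by
      rw [Finset.sum_sigma]
      refine Finset.sum_congr rfl fun S1 hS1 => ?_
      have hc : Xl r a (i :: L1) S1 =
          ∑ k ∈ S1, (-r) ^ rk S1 k • (a i k * Xl r a L1 (S1.erase k)) := rfl
      rw [hc, Finset.sum_mul, Finset.smul_sum]
      refine Finset.sum_congr rfl fun k hk => ?_
      rw [smul_mul_assoc, mul_assoc, smul_smul, ← pow_add]
    rw [hLHS, hRHS]
    refine Finset.sum_bij' (fun p _ => (⟨insert p.1 p.2, p.1⟩ : Σ S1 : Finset (Fin n), Fin n))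
      (fun q _ => (⟨q.2, q.1.erase q.2⟩ : Σ k : Fin n, Finset (Fin n))) ?_ ?_ ?_ ?_ ?_
    · rintro ⟨k, S1'⟩ hp
      rw [Finset.mem_sigma] at hp ⊢
      obtain ⟨hk, hS1'⟩ := hp
      rw [Finset.mem_powerset] at hS1'
      constructor
      · rw [Finset.mem_powerset]
        exact Finset.insert_subset hk (hS1'.trans (Finset.erase_subset k S))
      · exact Finset.mem_insert_self k S1'
    · rintro ⟨S1, k⟩ hq
      rw [Finset.mem_sigma] at hq ⊢
      obtain ⟨hS1, hk⟩ := hq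
      rw [Finset.mem_powerset] at hS1
      refine ⟨hS1 hk, ?_⟩
      rw [Finset.mem_powerset]
      exact Finset.erase_subset_erase k hS1
    · rintro ⟨k, S1'⟩ hp
      rw [Finset.mem_sigma, Finset.mem_powerset] at hp
      have hkn : k ∉ S1' := fun h => Finset.notMem_erase k S (hp.2 h)
      simp only [Finset.erase_insert hkn]
    · rintro ⟨S1, k⟩ hq
      rw [Finset.mem_sigma] at hq
      simp only [Finset.insert_erase hq.2]
    · rintro ⟨k, S1'⟩ hp
      rw [Finset.mem_sigma, Finset.mem_powerset] at hp
      obtain ⟨hk, hS1'⟩ := hp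
      have hkn : k ∉ S1' := fun h => Finset.notMem_erase k S (hS1' h)
      have hsd : (S.erase k) \ S1' = S \ insert k S1' := by
        ext x
        simp only [Finset.mem_sdiff, Finset.mem_erase, Finset.mem_insert]
        tauto
      have hB : Disjoint S1' (S \ insert k S1') := by
        rw [Finset.disjoint_left]
        intro x hx hx'
        rw [Finset.mem_sdiff, Finset.mem_insert] at hx'
        exact hx'.2 (Or.inr hx)
      have hU : S.erase k = S1' ∪ (S \ insert k S1') := by
        ext x
        simp only [Finset.mem_erase, Finset.mem_union, Finset.mem_sdiff, Finset.mem_insert]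
        constructor
        · rintro ⟨hxk, hxS⟩
          by_cases hx1 : x ∈ S1'
          · exact Or.inl hx1
          · exact Or.inr ⟨hxS, fun h => h.elim hxk hx1⟩
        · rintro (hx1 | ⟨hxS, hx2⟩)
          · have := hS1' hx1
            rw [Finset.mem_erase] at this
            exact this
          · exact ⟨fun e => hx2 (Or.inl e), hxS⟩
      have hrkS : rk S k = rk S1' k + rk (S \ insert k S1') k := by
        rw [← rk_erase_le (le_refl k), hU, rk_union hB]
      have hsign : rk S k + crs S1' (S \ insert k S1') =
          crs (insert k S1') (S \ insert k S1') + rk (insert k S1') k := by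
        rw [rk_insert_self]
        unfold crs
        rw [Finset.sum_insert hkn, hrkS]
        ring
      rw [Finset.erase_insert hkn, hsd, hsign]

lemma univ_orderEmb (h : (Finset.univ : Finset (Fin n)).card = n) (q : Fin n) :
    (Finset.univ : Finset (Fin n)).orderEmbOfFin h q = q := by
  have := Finset.orderEmbOfFin_unique h (f := fun x : Fin n => x)
    (fun x => Finset.mem_univ x) strictMono_id
  exact (congrFun this q).symm

lemma sl_get (T : Finset (Fin n)) (hT : T.card = (sl T).length) (p : Fin (sl T).length) :
    (sl T).get p = T.orderEmbOfFin hT p := by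
  rw [Finset.orderEmbOfFin_apply, List.get_eq_getElem]
  rfl

lemma Xl_sorted (r : F) (a : Fin n → Fin n → R) (T S : Finset (Fin n)) {t : ℕ}
    (hT : T.card = t) (hS : S.card = t) :
    Xl r a (sl T) S =
      rdet r (fun p q => a (T.orderEmbOfFin hT p) (S.orderEmbOfFin hS q)) := by
  have hlen : (sl T).length = t := (Finset.length_sort (· ≤ ·)).trans hT
  subst hlen
  have key := Xl_formula r a (sl T) S hS
  rw [key]
  unfold rdet
  refine Finset.sum_congr rfl fun τ _ => ?_
  congr 1

lemma rdet_eq_Xl (r : F) (a : Fin n → Fin n → R) :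
    rdet r a = Xl r a (sl (Finset.univ : Finset (Fin n))) Finset.univ := by
  have hcard : (Finset.univ : Finset (Fin n)).card = n := Finset.card_univ.trans
    (Fintype.card_fin n)
  rw [Xl_sorted r a Finset.univ Finset.univ hcard hcard]
  have : (fun p q => a ((Finset.univ : Finset (Fin n)).orderEmbOfFin hcard p)
      ((Finset.univ : Finset (Fin n)).orderEmbOfFin hcard q)) = a := by
    funext p q
    rw [univ_orderEmb, univ_orderEmb]
  rw [this]

lemma rk_univ (p : Fin n) : rk (Finset.univ : Finset (Fin n)) p = (p : ℕ) := by
  unfold rk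
  have heq : (Finset.univ.filter fun z : Fin n => z < p) =
      (Finset.univ.filter fun z : Fin n => (z : ℕ) < (p : ℕ)) := rfl
  rw [heq, card_filter_val_lt n p p.isLt.le]

lemma sum_rk_self {S : Finset (Fin n)} {t : ℕ} (hS : S.card = t) :
    ∑ p ∈ S, rk S p = ∑ k ∈ Finset.range t, k := by
  set f := S.orderEmbOfFin hS with hf
  have hmap : S = Finset.univ.map ⟨f, f.injective⟩ := by
    ext x
    simp only [Finset.mem_map, Finset.mem_univ, true_and, Function.Embedding.coeFn_mk]
    constructor
    · intro hx
      have : x ∈ Set.range f := by rw [Finset.range_orderEmbOfFin]; exact hx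
      obtain ⟨j, rfl⟩ := this
      exact ⟨j, rfl⟩
    · rintro ⟨j, rfl⟩
      exact Finset.orderEmbOfFin_mem S hS j
  calc ∑ p ∈ S, rk S p
      = ∑ x ∈ Finset.univ.map ⟨f, f.injective⟩, rk S x := by rw [← hmap]
    _ = ∑ k₀ : Fin t, rk S (f k₀) := Finset.sum_map _ _ _
    _ = ∑ k₀ : Fin t, (k₀ : ℕ) :=
        Finset.sum_congr rfl fun k₀ _ => rk_orderEmb hS k₀
    _ = ∑ k ∈ Finset.range t, k := Fin.sum_univ_eq_sum_range (fun i => i) t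

lemma crs_compl {S : Finset (Fin n)} {t : ℕ} (hS : S.card = t) :
    (crs S Sᶜ : ℤ) = (∑ j ∈ S, ((j : ℕ) : ℤ)) - ∑ k ∈ Finset.range t, (k : ℤ) := by
  have hsplit : ∀ p : Fin n, rk S p + rk Sᶜ p = (p : ℕ) := by
    intro p
    rw [← rk_union disjoint_compl_right, Finset.union_compl, rk_univ]
  have h1 : crs S Sᶜ + ∑ p ∈ S, rk S p = ∑ p ∈ S, (p : ℕ) := by
    unfold crs
    rw [← Finset.sum_add_distrib]
    refine Finset.sum_congr rfl fun p _ => ?_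
    rw [add_comm, hsplit p]
  have h2 := sum_rk_self hS
  rw [h2] at h1
  have h3 := congrArg (fun x : ℕ => (x : ℤ)) h1
  push_cast at h3 ⊢
  linarith

theorem laplace_main {r s : F} (hr : r ≠ 0) (hs : s ≠ 0) {a : Fin n → Fin n → R}
    (ha : IsQSemigroup r s a) (t : ℕ) (T : Finset (Fin n)) (hT : T.card = t) :
    rdet r a =
      ∑ S : Finset (Fin n),
        if hS : S.card = t then
          ((-r) ^ ((∑ j ∈ S, ((j : ℕ) : ℤ)) - ∑ i ∈ T, ((i : ℕ) : ℤ))) •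
            (rdet r (fun p q => a (T.orderEmbOfFin hT p) (S.orderEmbOfFin hS q)) *
              rdet r (fun p q =>
                a (Tᶜ.orderEmbOfFin (k := n - t)
                      (by rw [Finset.card_compl, Fintype.card_fin, hT]) p)
                  (Sᶜ.orderEmbOfFin (k := n - t)
                      (by rw [Finset.card_compl, Fintype.card_fin, hS]) q)))
        else 0 := by
  have hnr : (-r : F) ≠ 0 := neg_ne_zero.2 hr
  have hTc : Tᶜ.card = n - t := by rw [Finset.card_compl, Fintype.card_fin, hT]
  set c := (-r) ^ crs T Tᶜ with hc
  have hcne : c ≠ 0 := pow_ne_zero _ hnr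
  have hconcat := concat_sorted hs ha (e0 (R := R)) T Tᶜ disjoint_compl_right
  rw [Finset.union_compl] at hconcat
  have hstep1 : rdet r a = c⁻¹ • Xl r a (sl T ++ sl Tᶜ) Finset.univ := by
    rw [rdet_eq_Xl r a]
    have h2 : Xl r a (sl T ++ sl Tᶜ) Finset.univ =
        c • Xl r a (sl (Finset.univ : Finset (Fin n))) Finset.univ :=
      congrFun hconcat Finset.univ
    rw [h2, smul_smul, inv_mul_cancel₀ hcne, one_smul]
  rw [hstep1, Xl_split r a (sl T) (sl Tᶜ) Finset.univ, Finset.smul_sum]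
  rw [Finset.powerset_univ]
  refine Finset.sum_congr rfl fun S _ => ?_
  have hsd : Finset.univ \ S = Sᶜ := (Finset.compl_eq_univ_sdiff S).symm
  rw [hsd]
  by_cases hSc : S.card = t
  · rw [dif_pos hSc]
    have hScc : Sᶜ.card = n - t := by rw [Finset.card_compl, Fintype.card_fin, hSc]
    rw [smul_smul]
    rw [Xl_sorted r a T S hT hSc, Xl_sorted r a Tᶜ Sᶜ hTc hScc]
    congr 1
    · -- scalar equality
      rw [hc, ← zpow_natCast (-r) (crs S Sᶜ), ← zpow_natCast (-r) (crs T Tᶜ), ← zpow_neg,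
        ← zpow_add₀ hnr]
      congr 1
      have h1 := crs_compl hSc
      have h2 := crs_compl hT
      linarith
  · rw [dif_neg hSc]
    have h0 : Xl r a (sl T) S = 0 := by
      refine Xl_dim r a (sl T) S ?_
      have hlen : (sl T).length = t := (Finset.length_sort (· ≤ ·)).trans hT
      rw [hlen]
      exact hSc
    rw [h0, zero_mul, smul_zero, smul_zero]

end QLap

end QLapSection

/-- Laplace expansion of the quantum row-determinant. For a fixed
row set `T` of size `t` (rows `i_1 < ⋯ < i_t`; complementary rows `i_{t+1} < ⋯ < i_n`),
`rdet_r(A) = Σ (-r)^{(j_1+⋯+j_t)-(i_1+⋯+i_t)} rdet_r(A^{i_1…i_t}_{j_1…j_t})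
rdet_r(A^{i_{t+1}…i_n}_{j_{t+1}…j_n})`, summed over all column sets `S` of size `t`. -/
theorem laplace_rdet {F : Type*} [Field F] (r s : F) (hr : r ≠ 0) (hs : s ≠ 0)
    {R : Type*} [Ring R] [Algebra F R] {n : ℕ} (a : Fin n → Fin n → R)
    (ha : IsQSemigroup r s a) (t : ℕ) (T : Finset (Fin n)) (hT : T.card = t) :
    rdet r a =
      ∑ S : Finset (Fin n),
        if hS : S.card = t then
          ((-r) ^ ((∑ j ∈ S, ((j : ℕ) : ℤ)) - ∑ i ∈ T, ((i : ℕ) : ℤ))) •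
            (rdet r (fun p q => a (T.orderEmbOfFin hT p) (S.orderEmbOfFin hS q)) *
              rdet r (fun p q =>
                a (Tᶜ.orderEmbOfFin (k := n - t)
                      (by rw [Finset.card_compl, Fintype.card_fin, hT]) p)
                  (Sᶜ.orderEmbOfFin (k := n - t)
                      (by rw [Finset.card_compl, Fintype.card_fin, hS]) q)))
        else 0 := by
  exact QLap.laplace_main hr hs ha t T hT
end
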